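/- arXiv:2505.03657 — 4 statements merged into one kernel-verified Lean document; each statement's English description precedes it below -/
import Mathlib

section
/- Let (T0, T̃0) be a joint pair of abstract Friedrichs operators on a complex Hilbert space H and let T be a realisation of T0 (T0 ⊆ T ⊆ T1). Then the following statements are equivalent: (i) T is accretive; (ii) L := L1 restricted to dom T is accretive; (iii) dom T ⊆ W⁺, i.e. [u|u] ≥ 0 for every u ∈ dom T. -/
open scoped InnerProductSpace
open Filter Topology LinearPMap

noncomputable section

variable {H : Type*} [NormedAddCommGroup H] [InnerProductSpace ℂ H] [CompleteSpace H]

/-- The inner product used in the paper (antilinear in the **second** entry):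
`pInner x y = ⟪y, x⟫` in Mathlib's convention. -/
def pInner {H : Type*} [NormedAddCommGroup H] [InnerProductSpace ℂ H] (x y : H) : ℂ :=
  ⟪y, x⟫_ℂ

/-- A pair of densely defined operators with common domain satisfying conditions (T1) and (T2). -/
structure IsDualPairT12 (T0 T0t : H →ₗ.[ℂ] H) (lam : ℝ) : Prop where
  dom_eq : T0.domain = T0t.domain
  dense' : Dense (T0.domain : Set H)
  sym : ∀ (φ : T0.domain) (ψ : T0t.domain), pInner (T0 φ) (ψ : H) = pInner (φ : H) (T0t ψ)
  lam_pos : 0 < lam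
  bound : ∀ (x : H) (hx : x ∈ T0.domain),
    ‖T0 ⟨x, hx⟩ + T0t ⟨x, dom_eq.le hx⟩‖ ≤ 2 * lam * ‖x‖

/-- A joint pair of abstract Friedrichs operators: (T1), (T2) and (T3). -/
structure IsFriedrichsPair (T0 T0t : H →ₗ.[ℂ] H) (lam mu : ℝ)
    extends IsDualPairT12 T0 T0t lam : Prop where
  mu_pos : 0 < mu
  coercive : ∀ (x : H) (hx : x ∈ T0.domain),
    2 * mu * ‖x‖ ^ 2 ≤ (pInner (T0 ⟨x, hx⟩ + T0t ⟨x, dom_eq.le hx⟩) x).re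

/-- The boundary form `[u|v] := ⟨T₁u , v⟩ − ⟨u , T̃₁v⟩` on the graph space
`W := dom T₁ = dom (T̃₀)*`.  The hypothesis `hW` expresses the fact `dom T₁ = dom T̃₁`. -/
def bform (T0 T0t : H →ₗ.[ℂ] H) (hW : T0t.adjoint.domain = T0.adjoint.domain)
    (u v : T0t.adjoint.domain) : ℂ :=
  pInner (T0t.adjoint u) (v : H) - pInner (u : H) (T0.adjoint ⟨(v : H), hW.le v.2⟩)

/-- `X^[⊥]`, the `[·|·]`-orthogonal complement of `X ⊆ W` in the graph space. -/
def iorth (T0 T0t : H →ₗ.[ℂ] H) (hW : T0t.adjoint.domain = T0.adjoint.domain)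
    (X : Set ↥T0t.adjoint.domain) : Set ↥T0t.adjoint.domain :=
  {u | ∀ v ∈ X, bform T0 T0t hW u v = 0}

/-- `W⁺ = {u ∈ W : [u|u] ≥ 0}`. -/
def Wplus (T0 T0t : H →ₗ.[ℂ] H) (hW : T0t.adjoint.domain = T0.adjoint.domain) :
    Set ↥T0t.adjoint.domain :=
  {u | 0 ≤ (bform T0 T0t hW u u).re}

/-- `W⁻ = {u ∈ W : [u|u] ≤ 0}`. -/
def Wminus (T0 T0t : H →ₗ.[ℂ] H) (hW : T0t.adjoint.domain = T0.adjoint.domain) :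
    Set ↥T0t.adjoint.domain :=
  {u | (bform T0 T0t hW u u).re ≤ 0}

/-- (V)-boundary conditions for a subset `V` of the graph space `W`. -/
def VBC (T0 T0t : H →ₗ.[ℂ] H) (hW : T0t.adjoint.domain = T0.adjoint.domain)
    (V : Set ↥T0t.adjoint.domain) : Prop :=
  V ⊆ Wplus T0 T0t hW ∧ iorth T0 T0t hW V ⊆ Wminus T0 T0t hW ∧
    V = iorth T0 T0t hW (iorth T0 T0t hW V)

/-- The graph norm `‖u‖_{T₁} = ‖u‖ + ‖T₁ u‖` on the graph space. -/
def gnorm (T0t : H →ₗ.[ℂ] H) (u : T0t.adjoint.domain) : ℝ :=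
  ‖(u : H)‖ + ‖T0t.adjoint u‖

/-- The distance associated with the graph norm. -/
def gdist (T0t : H →ₗ.[ℂ] H) (u v : T0t.adjoint.domain) : ℝ := gnorm T0t (u - v)

/-- Closedness (sequential) in the graph-norm topology of `W`. -/
def GClosed (T0t : H →ₗ.[ℂ] H) (X : Set ↥T0t.adjoint.domain) : Prop :=
  ∀ f : ℕ → ↥T0t.adjoint.domain, (∀ n, f n ∈ X) →
    ∀ l, Tendsto (fun n => gdist T0t (f n) l) atTop (𝓝 0) → l ∈ X

/-- `W₀` (the domain of the closure of `T₀`), viewed as a subset of the graph space `W`. -/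
def W0set (T0 T0t : H →ₗ.[ℂ] H) : Set ↥T0t.adjoint.domain :=
  {u | (u : H) ∈ T0.closure.domain}

/-- The graph inner product on `W` (in the paper's convention). -/
def gip (T0t : H →ₗ.[ℂ] H) (u v : ↥T0t.adjoint.domain) : ℂ :=
  pInner (u : H) (v : H) + pInner (T0t.adjoint u) (T0t.adjoint v)

/-- The (Hilbert) orthogonal complement of `W₀` in the graph space. -/
def W0perp (T0 T0t : H →ₗ.[ℂ] H) : Set ↥T0t.adjoint.domain :=
  {u | ∀ v : ↥T0t.adjoint.domain, (v : H) ∈ T0.closure.domain → gip T0t u v = 0}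

/-- `ker T₁` as a subset of the graph space. -/
def kerT1set (T0t : H →ₗ.[ℂ] H) : Set ↥T0t.adjoint.domain := {u | T0t.adjoint u = 0}

/-- `ker T̃₁` as a subset of the graph space. -/
def kerT1tset (T0 T0t : H →ₗ.[ℂ] H) (hW : T0t.adjoint.domain = T0.adjoint.domain) :
    Set ↥T0t.adjoint.domain :=
  {u | T0.adjoint ⟨(u : H), hW.le u.2⟩ = 0}

/-- An operator `M ∈ L(W;W')`, encoded through the pairing `m u v = ⟨Mu, v⟩_{W',W}`
(linear in `u`, antilinear in `v`, and bounded with respect to the graph norm). -/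
structure MOp (T0t : H →ₗ.[ℂ] H) where
  m : ↥T0t.adjoint.domain → ↥T0t.adjoint.domain → ℂ
  add_left : ∀ u v w, m (u + v) w = m u w + m v w
  smul_left : ∀ (c : ℂ) (u w), m (c • u) w = c * m u w
  add_right : ∀ u v w, m u (v + w) = m u v + m u w
  smul_right : ∀ (c : ℂ) (u w), m u (c • w) = starRingEnd ℂ c * m u w
  bounded : ∃ C, ∀ u v, ‖m u v‖ ≤ C * (gnorm T0t u * gnorm T0t v)

/-- The (M)-boundary conditions for a pairing `m u v = ⟨Mu, v⟩_{W',W}`: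
(M1) non-negativity and (M2) `W = ker (D − M) + ker (D + M)`. -/
def MBC (T0 T0t : H →ₗ.[ℂ] H) (hW : T0t.adjoint.domain = T0.adjoint.domain)
    (m : ↥T0t.adjoint.domain → ↥T0t.adjoint.domain → ℂ) : Prop :=
  (∀ u, 0 ≤ (m u u).re) ∧
  (∀ w : ↥T0t.adjoint.domain, ∃ a b : ↥T0t.adjoint.domain,
    (∀ v, bform T0 T0t hW a v = m a v) ∧ (∀ v, bform T0 T0t hW b v + m b v = 0) ∧ w = a + b)

/-- `ker (D − M)` for a pairing `m`. -/
def kerDsubM (T0 T0t : H →ₗ.[ℂ] H) (hW : T0t.adjoint.domain = T0.adjoint.domain)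
    (m : ↥T0t.adjoint.domain → ↥T0t.adjoint.domain → ℂ) : Set ↥T0t.adjoint.domain :=
  {u | ∀ v, bform T0 T0t hW u v = m u v}

/-- `ker (D + M)` for a pairing `m`. -/
def kerDaddM (T0 T0t : H →ₗ.[ℂ] H) (hW : T0t.adjoint.domain = T0.adjoint.domain)
    (m : ↥T0t.adjoint.domain → ↥T0t.adjoint.domain → ℂ) : Set ↥T0t.adjoint.domain :=
  {u | ∀ v, bform T0 T0t hW u v + m u v = 0}


section Aux

variable {H : Type*} [NormedAddCommGroup H] [InnerProductSpace ℂ H] [CompleteSpace H]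

private lemma re_flip (a b : H) : (⟪a, b⟫_ℂ).re = (⟪b, a⟫_ℂ).re := by
  rw [← inner_conj_symm b a, Complex.conj_re]

private lemma abs_re_inner_le (a b : H) : |(⟪a, b⟫_ℂ).re| ≤ ‖a‖ * ‖b‖ :=
  (Complex.abs_re_le_norm _).trans
    (norm_inner_le_norm a b)

private lemma aux_eps {x C : ℝ} (hC : 0 ≤ C)
    (h : ∀ ε : ℝ, 0 < ε → ε ≤ 1 → -(ε * C) ≤ x) : 0 ≤ x := by
  by_contra h0
  push_neg at h0
  have hd : (0:ℝ) < -x / (2 * (C + 1)) := div_pos (by linarith) (by linarith)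
  have hε1 : (0:ℝ) < min 1 (-x / (2 * (C + 1))) := lt_min one_pos hd
  have h2 := h _ hε1 (min_le_left _ _)
  have h3 : min 1 (-x / (2 * (C + 1))) * C ≤ (-x / (2 * (C + 1))) * C :=
    mul_le_mul_of_nonneg_right (min_le_right _ _) hC
  have h4 : (-x / (2 * (C + 1))) * C ≤ -x / 2 := by
    rw [div_mul_eq_mul_div, div_le_div_iff₀ (by positivity) (by norm_num)]
    nlinarith
  linarith

end Aux

set_option maxHeartbeats 2000000 in
/-- Lemma 3.1: for a realisation `T₀ ⊆ T ⊆ T₁`, the following are equivalent: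
(i) `T` is accretive; (ii) `L := L₁|_{dom T}` is accretive; (iii) `dom T ⊆ W⁺`. -/
theorem accretive_iff_skew_accretive_iff_nonneg
    (T0 T0t : H →ₗ.[ℂ] H) (lam mu : ℝ) (hF : IsFriedrichsPair T0 T0t lam mu)
    (hW : T0t.adjoint.domain = T0.adjoint.domain)
    (T : H →ₗ.[ℂ] H) (hT0T : T0 ≤ T) (hTT1 : T ≤ T0t.adjoint) :
    ((∀ u : T.domain, 0 ≤ (pInner (T u) (u : H)).re) ↔
      (∀ u : T.domain,
        0 ≤ (pInner ((2 : ℂ)⁻¹ • (T0t.adjoint ⟨(u : H), hTT1.1 u.2⟩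
              - T0.adjoint ⟨(u : H), hW.le (hTT1.1 u.2)⟩)) (u : H)).re)) ∧
    ((∀ u : T.domain,
        0 ≤ (pInner ((2 : ℂ)⁻¹ • (T0t.adjoint ⟨(u : H), hTT1.1 u.2⟩
              - T0.adjoint ⟨(u : H), hW.le (hTT1.1 u.2)⟩)) (u : H)).re) ↔
      (∀ u : T.domain,
        0 ≤ (bform T0 T0t hW ⟨(u : H), hTT1.1 u.2⟩ ⟨(u : H), hTT1.1 u.2⟩).re)) := by
  have hD : Dense (T0.domain : Set H) := hF.dense'
  have hDt : Dense (T0t.domain : Set H) := by rw [← hF.dom_eq]; exact hD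
  have hfa1 := LinearPMap.adjoint_isFormalAdjoint (T := T0t) hDt
  have hfa2 := LinearPMap.adjoint_isFormalAdjoint (T := T0) hD
  have hsym : T0.IsFormalAdjoint T0t := by
    intro x y
    have h := hF.sym x y
    simp only [pInner] at h
    rw [← inner_conj_symm, h, inner_conj_symm]
  have h01 : T0 ≤ T0t.adjoint := LinearPMap.IsFormalAdjoint.le_adjoint hDt hsym.symm
  have h0t1 : T0t ≤ T0.adjoint := LinearPMap.IsFormalAdjoint.le_adjoint hD hsym
  -- the symmetric part is ≥ 0 on the whole graph space
  have hQ : ∀ u : T0t.adjoint.domain,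
      0 ≤ (⟪(u : H), T0t.adjoint u⟫_ℂ).re
        + (⟪(u : H), T0.adjoint ⟨(u : H), hW.le u.2⟩⟫_ℂ).re := by
    intro u
    set s : H := T0t.adjoint u + T0.adjoint ⟨(u : H), hW.le u.2⟩ with hs
    have hkey : (⟪(u : H), T0t.adjoint u⟫_ℂ).re
        + (⟪(u : H), T0.adjoint ⟨(u : H), hW.le u.2⟩⟫_ℂ).re = (⟪(u : H), s⟫_ℂ).re := by
      rw [hs, inner_add_right, Complex.add_re]
    rw [hkey]
    refine aux_eps (C := ‖s‖ + 2 * lam * (‖(u : H)‖ + 1))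
      (by nlinarith [hF.lam_pos, norm_nonneg s, norm_nonneg ((u : H))]) ?_
    intro ε hε hε1
    obtain ⟨φ, hφ, hdist⟩ := hD.exists_dist_lt (u : H) hε
    rw [dist_eq_norm] at hdist
    set g : H := T0 ⟨φ, hφ⟩ + T0t ⟨φ, hF.dom_eq.le hφ⟩ with hg
    have hsφ : ⟪φ, s⟫_ℂ = ⟪g, (u : H)⟫_ℂ := by
      have e1 : ⟪s, φ⟫_ℂ = ⟪(u : H), g⟫_ℂ := by
        rw [hs, hg, inner_add_left, inner_add_right]
        rw [hfa1 u ⟨φ, hF.dom_eq.le hφ⟩, hfa2 ⟨(u : H), hW.le u.2⟩ ⟨φ, hφ⟩]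
        ring
      rw [← inner_conj_symm φ s, e1, inner_conj_symm]
    have hsplit : (⟪(u : H), s⟫_ℂ).re
        = (⟪(u : H) - φ, s⟫_ℂ).re + (⟪g, (u : H) - φ⟫_ℂ).re + (⟪g, φ⟫_ℂ).re := by
      have : ⟪(u : H), s⟫_ℂ = ⟪(u : H) - φ, s⟫_ℂ + ⟪g, (u : H) - φ⟫_ℂ + ⟪g, φ⟫_ℂ := by
        rw [inner_sub_left, inner_sub_right, ← hsφ]; ring
      rw [this, Complex.add_re, Complex.add_re]
    have hco : 2 * mu * ‖φ‖ ^ 2 ≤ (⟪g, φ⟫_ℂ).re := by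
      have h := hF.coercive φ hφ
      simp only [pInner] at h
      rw [re_flip]
      exact h
    have hgn : ‖g‖ ≤ 2 * lam * ‖φ‖ := hF.bound φ hφ
    have hφn : ‖φ‖ ≤ ‖(u : H)‖ + 1 := by
      have h2 : ‖φ‖ ≤ ‖(u : H)‖ + ‖(u : H) - φ‖ := by
        have := norm_sub_le ((u : H)) ((u : H) - φ)
        simpa using this
      linarith
    have b1 : -(ε * ‖s‖) ≤ (⟪(u : H) - φ, s⟫_ℂ).re := by
      have h := (abs_le.mp (abs_re_inner_le ((u : H) - φ) s)).1
      have : ‖(u : H) - φ‖ * ‖s‖ ≤ ε * ‖s‖ :=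
        mul_le_mul_of_nonneg_right hdist.le (norm_nonneg _)
      linarith
    have b2 : -(ε * (2 * lam * (‖(u : H)‖ + 1))) ≤ (⟪g, (u : H) - φ⟫_ℂ).re := by
      have h := (abs_le.mp (abs_re_inner_le g ((u : H) - φ))).1
      have h2 : ‖g‖ * ‖(u : H) - φ‖ ≤ 2 * lam * (‖(u : H)‖ + 1) * ε := by
        have : ‖g‖ ≤ 2 * lam * (‖(u : H)‖ + 1) :=
          hgn.trans (by nlinarith [hF.lam_pos, norm_nonneg φ])
        nlinarith [norm_nonneg g, norm_nonneg ((u : H) - φ)]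
      nlinarith
    have hg0 : 0 ≤ (⟪g, φ⟫_ℂ).re :=
      le_trans (by nlinarith [hF.mu_pos, sq_nonneg ‖φ‖]) hco
    rw [hsplit]
    nlinarith
  -- the boundary form vanishes when one argument is in D
  have hbr0 : ∀ (w : T0t.adjoint.domain) (φ : H) (hφ : φ ∈ T0.domain)
      (hφ1 : φ ∈ T0t.adjoint.domain), bform T0 T0t hW w ⟨φ, hφ1⟩ = 0 := by
    intro w φ hφ hφ1
    have e0 : bform T0 T0t hW w ⟨φ, hφ1⟩
        = ⟪φ, T0t.adjoint w⟫_ℂ - ⟪T0.adjoint ⟨φ, hW.le hφ1⟩, (w : H)⟫_ℂ := rfl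
    have e1 : T0.adjoint ⟨φ, hW.le hφ1⟩ = T0t ⟨φ, hF.dom_eq.le hφ⟩ :=
      (h0t1.2 (x := ⟨φ, hF.dom_eq.le hφ⟩) (y := ⟨φ, hW.le hφ1⟩) rfl).symm
    have e2 : ⟪φ, T0t.adjoint w⟫_ℂ = ⟪T0t ⟨φ, hF.dom_eq.le hφ⟩, (w : H)⟫_ℂ := by
      rw [← inner_conj_symm φ (T0t.adjoint w), hfa1 w ⟨φ, hF.dom_eq.le hφ⟩,
        inner_conj_symm]
    rw [e0, e1, e2, sub_self]
  have hbl0 : ∀ (w : T0t.adjoint.domain) (φ : H) (hφ : φ ∈ T0.domain)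
      (hφ1 : φ ∈ T0t.adjoint.domain), bform T0 T0t hW ⟨φ, hφ1⟩ w = 0 := by
    intro w φ hφ hφ1
    have e0 : bform T0 T0t hW ⟨φ, hφ1⟩ w
        = ⟪(w : H), T0t.adjoint ⟨φ, hφ1⟩⟫_ℂ - ⟪T0.adjoint ⟨(w : H), hW.le w.2⟩, φ⟫_ℂ := rfl
    have e1 : T0t.adjoint ⟨φ, hφ1⟩ = T0 ⟨φ, hφ⟩ :=
      (h01.2 (x := ⟨φ, hφ⟩) (y := ⟨φ, hφ1⟩) rfl).symm
    rw [e0, e1, hfa2 ⟨(w : H), hW.le w.2⟩ ⟨φ, hφ⟩, sub_self]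
  -- the boundary form is unchanged by shifts from D
  have hshift : ∀ (a : T0t.adjoint.domain) (φ : H) (hφ : φ ∈ T0.domain)
      (hφ1 : φ ∈ T0t.adjoint.domain),
      bform T0 T0t hW (a + ⟨φ, hφ1⟩) (a + ⟨φ, hφ1⟩) = bform T0 T0t hW a a := by
    intro a φ hφ hφ1
    set b : T0t.adjoint.domain := ⟨φ, hφ1⟩ with hb
    have hT1add : T0t.adjoint (a + b) = T0t.adjoint a + T0t.adjoint b :=
      LinearPMap.map_add _ a b
    have hmk : (⟨(a : H) + φ, hW.le (a + b).2⟩ : T0.adjoint.domain)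
        = ⟨(a : H), hW.le a.2⟩ + ⟨φ, hW.le hφ1⟩ := by
      apply Subtype.ext; rfl
    have hT1tadd : T0.adjoint ⟨(a : H) + φ, hW.le (a + b).2⟩
        = T0.adjoint ⟨(a : H), hW.le a.2⟩ + T0.adjoint ⟨φ, hW.le hφ1⟩ := by
      rw [hmk, LinearPMap.map_add]
    have hub : bform T0 T0t hW a b = 0 := hbr0 a φ hφ hφ1
    have hba : bform T0 T0t hW b a = 0 := hbl0 a φ hφ hφ1
    have hbb : bform T0 T0t hW b b = 0 := hbr0 b φ hφ hφ1
    have expand : bform T0 T0t hW (a + b) (a + b)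
        = bform T0 T0t hW a a + bform T0 T0t hW a b
          + (bform T0 T0t hW b a + bform T0 T0t hW b b) := by
      have hT1tadd' : T0.adjoint ⟨(a : H) + (b : H), hW.le (a + b).2⟩
          = T0.adjoint ⟨(a : H), hW.le a.2⟩ + T0.adjoint ⟨(b : H), hW.le b.2⟩ := hT1tadd
      simp only [bform, pInner, hT1add, hT1tadd, hT1tadd', Submodule.coe_add, inner_add_left,
        inner_add_right]
      ring
    rw [expand, hub, hba, hbb]; ring
  -- real part of the boundary form on the diagonal
  have hbre : ∀ u : T0t.adjoint.domain,
      (bform T0 T0t hW u u).re = (⟪(u : H), T0t.adjoint u⟫_ℂ).re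
        - (⟪(u : H), T0.adjoint ⟨(u : H), hW.le u.2⟩⟫_ℂ).re := by
    intro u
    have e0 : bform T0 T0t hW u u
        = ⟪(u : H), T0t.adjoint u⟫_ℂ - ⟪T0.adjoint ⟨(u : H), hW.le u.2⟩, (u : H)⟫_ℂ := rfl
    rw [e0, Complex.sub_re, re_flip (T0.adjoint ⟨(u : H), hW.le u.2⟩) ((u : H))]
  -- the accretivity identity for elements of dom T
  have hTval : ∀ u : T.domain, T u = T0t.adjoint ⟨(u : H), hTT1.1 u.2⟩ := by
    intro u; exact hTT1.2 rfl
  have hdec : ∀ u : T.domain, (pInner (T u) (u : H)).re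
      = ((bform T0 T0t hW ⟨(u : H), hTT1.1 u.2⟩ ⟨(u : H), hTT1.1 u.2⟩).re
        + ((⟪(u : H), T0t.adjoint ⟨(u : H), hTT1.1 u.2⟩⟫_ℂ).re
          + (⟪(u : H), T0.adjoint ⟨(u : H), hW.le (hTT1.1 u.2)⟩⟫_ℂ).re)) / 2 := by
    intro u
    have e0 : (pInner (T u) (u : H)).re
        = (⟪(u : H), T0t.adjoint ⟨(u : H), hTT1.1 u.2⟩⟫_ℂ).re := by
      rw [pInner, hTval u]
    rw [e0, hbre ⟨(u : H), hTT1.1 u.2⟩]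
    ring
  -- (ii) ↔ (iii) : pointwise identity
  have h23 : ∀ u : T.domain,
      (pInner ((2 : ℂ)⁻¹ • (T0t.adjoint ⟨(u : H), hTT1.1 u.2⟩
        - T0.adjoint ⟨(u : H), hW.le (hTT1.1 u.2)⟩)) (u : H)).re
      = (bform T0 T0t hW ⟨(u : H), hTT1.1 u.2⟩ ⟨(u : H), hTT1.1 u.2⟩).re / 2 := by
    intro u
    rw [pInner, inner_smul_right, inner_sub_right, hbre ⟨(u : H), hTT1.1 u.2⟩]
    have : ((2 : ℂ)⁻¹ * (⟪(u : H), T0t.adjoint ⟨(u : H), hTT1.1 u.2⟩⟫_ℂ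
        - ⟪(u : H), T0.adjoint ⟨(u : H), hW.le (hTT1.1 u.2)⟩⟫_ℂ)).re
        = ((⟪(u : H), T0t.adjoint ⟨(u : H), hTT1.1 u.2⟩⟫_ℂ
          - ⟪(u : H), T0.adjoint ⟨(u : H), hW.le (hTT1.1 u.2)⟩⟫_ℂ).re) / 2 := by
      set z := ⟪(u : H), T0t.adjoint ⟨(u : H), hTT1.1 u.2⟩⟫_ℂ
        - ⟪(u : H), T0.adjoint ⟨(u : H), hW.le (hTT1.1 u.2)⟩⟫_ℂ
      have h2 : ((2 : ℂ)⁻¹).im = 0 := by norm_num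
      have h1 : ((2 : ℂ)⁻¹).re = 2⁻¹ := by norm_num
      rw [Complex.mul_re, h1, h2]
      ring
    rw [this, Complex.sub_re]
  -- (i) → (iii)
  have h1to3 : (∀ u : T.domain, 0 ≤ (pInner (T u) (u : H)).re) →
      ∀ u : T.domain,
        0 ≤ (bform T0 T0t hW ⟨(u : H), hTT1.1 u.2⟩ ⟨(u : H), hTT1.1 u.2⟩).re := by
    intro hi u
    set u1 : T0t.adjoint.domain := ⟨(u : H), hTT1.1 u.2⟩ with hu1
    set s : H := T0t.adjoint u1 + T0.adjoint ⟨(u : H), hW.le (hTT1.1 u.2)⟩ with hs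
    clear_value s
    refine aux_eps (C := ‖s‖ + 2 * lam * (‖(u : H)‖ + 1))
      (by nlinarith [hF.lam_pos, norm_nonneg s, norm_nonneg ((u : H))]) ?_
    intro ε hε hε1
    obtain ⟨φ, hφ, hdist⟩ := hD.exists_dist_lt (-(u : H)) hε
    rw [dist_eq_norm] at hdist
    have hdist' : ‖(u : H) + φ‖ < ε := by
      rwa [show -(u : H) - φ = -((u : H) + φ) by abel, norm_neg] at hdist
    set v : T.domain := u + ⟨φ, hT0T.1 hφ⟩ with hv
    have hvc : ((v : T.domain) : H) = (u : H) + φ := rfl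
    have hv1e : (⟨(v : H), hTT1.1 v.2⟩ : T0t.adjoint.domain) = u1 + ⟨φ, h01.1 hφ⟩ := by
      apply Subtype.ext; rfl
    have hbe : bform T0 T0t hW ⟨(v : H), hTT1.1 v.2⟩ ⟨(v : H), hTT1.1 v.2⟩
        = bform T0 T0t hW u1 u1 := by
      rw [hv1e]; exact hshift u1 φ hφ (h01.1 hφ)
    set g : H := T0 ⟨φ, hφ⟩ + T0t ⟨φ, hF.dom_eq.le hφ⟩ with hg
    have e1 : T0t.adjoint ⟨(v : H), hTT1.1 v.2⟩ = T0t.adjoint u1 + T0 ⟨φ, hφ⟩ := by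
      rw [hv1e, LinearPMap.map_add]
      congr 1
      exact (h01.2 (x := ⟨φ, hφ⟩) (y := ⟨φ, h01.1 hφ⟩) rfl).symm
    have hmk : (⟨(v : H), hW.le (hTT1.1 v.2)⟩ : T0.adjoint.domain)
        = ⟨(u : H), hW.le (hTT1.1 u.2)⟩ + ⟨φ, hW.le (h01.1 hφ)⟩ := by
      apply Subtype.ext; rfl
    have e2 : T0.adjoint ⟨(v : H), hW.le (hTT1.1 v.2)⟩
        = T0.adjoint ⟨(u : H), hW.le (hTT1.1 u.2)⟩ + T0t ⟨φ, hF.dom_eq.le hφ⟩ := by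
      rw [hmk, LinearPMap.map_add]
      congr 1
      exact (h0t1.2 (x := ⟨φ, hF.dom_eq.le hφ⟩) (y := ⟨φ, hW.le (h01.1 hφ)⟩) rfl).symm
    have hsv : T0t.adjoint ⟨(v : H), hTT1.1 v.2⟩
        + T0.adjoint ⟨(v : H), hW.le (hTT1.1 v.2)⟩ = s + g := by
      rw [e1, e2, hs, hg]; abel
    have hgn : ‖g‖ ≤ 2 * lam * ‖φ‖ := by rw [hg]; exact hF.bound φ hφ
    have hiv := hi v
    rw [hdec v, hbe] at hiv
    have hQv : (⟪(v : H), T0t.adjoint ⟨(v : H), hTT1.1 v.2⟩⟫_ℂ).re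
        + (⟪(v : H), T0.adjoint ⟨(v : H), hW.le (hTT1.1 v.2)⟩⟫_ℂ).re
        = (⟪(v : H), s + g⟫_ℂ).re := by
      rw [← Complex.add_re, ← inner_add_right, hsv]
    rw [hQv] at hiv
    clear_value g v u1
    have hφn : ‖φ‖ ≤ ‖(u : H)‖ + 1 := by
      have h2 : ‖φ‖ ≤ ‖(u : H) + φ‖ + ‖(u : H)‖ := by
        have := norm_sub_le ((u : H) + φ) ((u : H))
        simpa using this
      linarith
    have hQbound : (⟪(v : H), s + g⟫_ℂ).re ≤ ε * (‖s‖ + 2 * lam * (‖(u : H)‖ + 1)) := by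
      have h1 := (abs_le.mp (abs_re_inner_le ((v : H)) (s + g))).2
      have h2 : ‖s + g‖ ≤ ‖s‖ + 2 * lam * (‖(u : H)‖ + 1) := by
        have h5 := norm_add_le s g
        have h3 : 2 * lam * ‖φ‖ ≤ 2 * lam * (‖(u : H)‖ + 1) := by
          nlinarith [hF.lam_pos]
        linarith
      have h4 : ‖(v : H)‖ * ‖s + g‖ ≤ ε * (‖s‖ + 2 * lam * (‖(u : H)‖ + 1)) := by
        have hvn : ‖(v : H)‖ ≤ ε := by rw [hvc]; exact hdist'.le
        have hsg : (0:ℝ) ≤ ‖s + g‖ := norm_nonneg _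
        nlinarith [norm_nonneg ((v : H))]
      linarith
    linarith
  -- (iii) → (i)
  have h3to1 : (∀ u : T.domain,
      0 ≤ (bform T0 T0t hW ⟨(u : H), hTT1.1 u.2⟩ ⟨(u : H), hTT1.1 u.2⟩).re) →
      ∀ u : T.domain, 0 ≤ (pInner (T u) (u : H)).re := by
    intro hiii u
    rw [hdec u]
    have := hQ ⟨(u : H), hTT1.1 u.2⟩
    have h2 := hiii u
    linarith
  constructor
  · constructor
    · intro hi u
      rw [h23 u]
      have := h1to3 hi u
      linarith
    · intro hii
      apply h3to1
      intro u
      have := hii u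
      rw [h23 u] at this
      linarith
  · constructor
    · intro hii u
      have := hii u
      rw [h23 u] at this
      linarith
    · intro hiii u
      rw [h23 u]
      have := hiii u
      linarith
end
end

section
/- Let (T0, T̃0) be a joint pair of abstract Friedrichs operators on a complex Hilbert space H and let T be a realisation of T0 (T0 ⊆ T ⊆ T1). Then the following statements are equivalent: (i) T is m-accretive; (ii) L := L1 restricted to dom T is m-accretive; (iii) dom T satisfies (V)-boundary conditions. -/
open scoped InnerProductSpace
open Filter Topology LinearPMap

set_option linter.unusedSectionVars false
set_option linter.unusedVariables false

noncomputable section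

variable {H : Type*} [NormedAddCommGroup H] [InnerProductSpace ℂ H] [CompleteSpace H]

/-! ### Auxiliary lemmas for `pInner` -/

section PInnerLemmas

variable {x y z : H} {c : ℂ}

lemma pInner_add_left (x y z : H) : pInner (x + y) z = pInner x z + pInner y z := by
  simp [pInner, inner_add_right]

lemma pInner_sub_left (x y z : H) : pInner (x - y) z = pInner x z - pInner y z := by
  simp [pInner, inner_sub_right]

lemma pInner_add_right (x y z : H) : pInner x (y + z) = pInner x y + pInner x z := by
  simp [pInner, inner_add_left]

lemma pInner_sub_right (x y z : H) : pInner x (y - z) = pInner x y - pInner x z := by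
  simp [pInner, inner_sub_left]

lemma pInner_smul_left (c : ℂ) (x y : H) : pInner (c • x) y = c * pInner x y := by
  simp [pInner, inner_smul_right]

lemma pInner_neg_left (x y : H) : pInner (-x) y = -pInner x y := by
  simp [pInner]

lemma pInner_zero_left (y : H) : pInner 0 y = 0 := by simp [pInner]

lemma pInner_zero_right (x : H) : pInner x 0 = 0 := by simp [pInner]

lemma pInner_conj (x y : H) : starRingEnd ℂ (pInner x y) = pInner y x := by
  simp [pInner]

lemma pInner_re_comm (x y : H) : (pInner x y).re = (pInner y x).re := by
  rw [← pInner_conj x y, Complex.conj_re]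

lemma norm_pInner_le (x y : H) : ‖pInner x y‖ ≤ ‖x‖ * ‖y‖ := by
  rw [pInner, mul_comm]
  exact norm_inner_le_norm y x

lemma pInner_re_le (x y : H) : (pInner x y).re ≤ ‖x‖ * ‖y‖ :=
  le_trans (Complex.re_le_norm _) (le_trans (le_of_eq rfl)
    (norm_pInner_le x y))

lemma pInner_self_re (x : H) : (pInner x x).re = ‖x‖ ^ 2 := by
  have := inner_self_eq_norm_sq (𝕜 := ℂ) (x := x)
  simpa [pInner, RCLike.re_to_complex] using this

end PInnerLemmas

/-! ### Abstract framework -/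

namespace AFr

variable {W D : Submodule ℂ H} {A B : ↥W →ₗ[ℂ] H} {lam mu : ℝ}

/-- The abstract boundary form. -/
def bf (A B : ↥W →ₗ[ℂ] H) (u v : ↥W) : ℂ :=
  pInner (A u) (v : H) - pInner (u : H) (B v)

/-- The abstract boundary-orthogonal complement. -/
def ios (A B : ↥W →ₗ[ℂ] H) (X : Set ↥W) : Set ↥W := {u | ∀ v ∈ X, bf A B u v = 0}

/-- The hypotheses of the abstract master theorem. -/
structure Setup (W D : Submodule ℂ H) (hDW : D ≤ W) (A B : ↥W →ₗ[ℂ] H)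
    (lam mu : ℝ) : Prop where
  hdense : Dense (D : Set H)
  lam_pos : 0 < lam
  mu_pos : 0 < mu
  a1 : ∀ (u : ↥W) ⦃φ : H⦄ (hφ : φ ∈ D),
    pInner (A u) φ = pInner (u : H) (B ⟨φ, hDW hφ⟩)
  a2 : ∀ (u : ↥W) ⦃φ : H⦄ (hφ : φ ∈ D),
    pInner (B u) φ = pInner (u : H) (A ⟨φ, hDW hφ⟩)
  memA : ∀ (x : H) (C : ℝ),
    (∀ ⦃φ : H⦄ (hφ : φ ∈ D), ‖pInner x (A ⟨φ, hDW hφ⟩)‖ ≤ C * ‖φ‖) → x ∈ W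
  memB : ∀ (x : H) (C : ℝ),
    (∀ ⦃φ : H⦄ (hφ : φ ∈ D), ‖pInner x (B ⟨φ, hDW hφ⟩)‖ ≤ C * ‖φ‖) → x ∈ W
  sb : ∀ u : ↥W, ‖A u + B u‖ ≤ 2 * lam * ‖(u : H)‖
  sc : ∀ u : ↥W, 2 * mu * ‖(u : H)‖ ^ 2 ≤ (pInner (A u + B u) ((u : H))).re
  ssym : ∀ u v : ↥W, pInner (A u + B u) ((v : H)) = pInner ((u : H)) (A v + B v)

variable {hDW : D ≤ W}

lemma Setup.swap (st : Setup W D hDW A B lam mu) : Setup W D hDW B A lam mu where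
  hdense := st.hdense
  lam_pos := st.lam_pos
  mu_pos := st.mu_pos
  a1 := st.a2
  a2 := st.a1
  memA := st.memB
  memB := st.memA
  sb := fun u => by rw [add_comm]; exact st.sb u
  sc := fun u => by rw [add_comm]; exact st.sc u
  ssym := fun u v => by rw [add_comm (B u), add_comm (B v)]; exact st.ssym u v

lemma Setup.ext_pInner (st : Setup W D hDW A B lam mu) {x y : H}
    (h : ∀ ⦃φ : H⦄ (_ : φ ∈ D), pInner x φ = pInner y φ) : x = y :=
  st.hdense.eq_of_inner_right ℂ fun v hv => h hv

lemma bf_add_left (u u' v : ↥W) : bf A B (u + u') v = bf A B u v + bf A B u' v := by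
  simp only [bf, _root_.map_add, Submodule.coe_add, pInner_add_left, pInner_add_right]
  ring

lemma bf_sub_left (u u' v : ↥W) : bf A B (u - u') v = bf A B u v - bf A B u' v := by
  simp only [bf, _root_.map_sub, Submodule.coe_sub, pInner_sub_left, pInner_sub_right]
  ring

lemma bf_sub_right (u v v' : ↥W) : bf A B u (v - v') = bf A B u v - bf A B u v' := by
  simp only [bf, _root_.map_sub, Submodule.coe_sub, pInner_sub_left, pInner_sub_right]
  ring

lemma Setup.bf_phi_right (st : Setup W D hDW A B lam mu) (u : ↥W) ⦃φ : H⦄ (hφ : φ ∈ D) :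
    bf A B u ⟨φ, hDW hφ⟩ = 0 := by
  simp only [bf, st.a1 u hφ]
  exact sub_self _

lemma Setup.bf_phi_left (st : Setup W D hDW A B lam mu) (u : ↥W) ⦃φ : H⦄ (hφ : φ ∈ D) :
    bf A B ⟨φ, hDW hφ⟩ u = 0 := by
  have h := st.a2 u hφ
  have h2 : pInner (φ : H) (B u) = pInner (A ⟨φ, hDW hφ⟩) (u : H) := by
    rw [← pInner_conj (B u) φ, h, pInner_conj]
  simp only [bf, h2]
  exact sub_self _

lemma Setup.bf_conj (st : Setup W D hDW A B lam mu) (u v : ↥W) :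
    bf A B u v = starRingEnd ℂ (bf A B v u) := by
  have hs := st.ssym u v
  have hsub : (starRingEnd ℂ) (pInner (A v) ((u : H)) - pInner ((v : H)) (B u))
      = pInner ((u : H)) (A v) - pInner (B u) ((v : H)) := by
    rw [_root_.map_sub, pInner_conj, pInner_conj]
  simp only [bf, hsub]
  simp only [pInner_add_left, pInner_add_right] at hs
  linear_combination hs

lemma Setup.re_bf (st : Setup W D hDW A B lam mu) (u : ↥W) :
    (bf A B u u).re = 2 * (pInner (A u) (u : H)).re - (pInner (A u + B u) ((u : H))).re := by
  have h1 : (pInner ((u : H)) (B u)).re = (pInner (B u) (u : H)).re := pInner_re_comm _ _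
  simp only [bf, Complex.sub_re, pInner_add_left, Complex.add_re, h1]
  ring

lemma Setup.re_bf_swap (st : Setup W D hDW A B lam mu) (u : ↥W) :
    (bf B A u u).re = -(bf A B u u).re := by
  have h1 : (pInner ((u : H)) (B u)).re = (pInner (B u) (u : H)).re := pInner_re_comm _ _
  have h2 : (pInner ((u : H)) (A u)).re = (pInner (A u) (u : H)).re := pInner_re_comm _ _
  simp only [bf, Complex.sub_re, h1, h2]
  ring

lemma pInner_re_ge (x y : H) : -(‖x‖ * ‖y‖) ≤ (pInner x y).re := by
  have h := norm_pInner_le x y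
  have h2 : |(pInner x y).re| ≤ ‖pInner x y‖ := by
    exact Complex.abs_re_le_norm _
  have h3 := neg_abs_le ((pInner x y).re)
  linarith

section SDerive

variable (hdense : Dense (D : Set H)) (hlam : 0 < lam) (hmu : 0 < mu)
  (a1 : ∀ (u : ↥W) ⦃φ : H⦄ (hφ : φ ∈ D),
    pInner (A u) φ = pInner (u : H) (B ⟨φ, hDW hφ⟩))
  (a2 : ∀ (u : ↥W) ⦃φ : H⦄ (hφ : φ ∈ D),
    pInner (B u) φ = pInner (u : H) (A ⟨φ, hDW hφ⟩))
  (sbD : ∀ ⦃φ : H⦄ (hφ : φ ∈ D),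
    ‖A ⟨φ, hDW hφ⟩ + B ⟨φ, hDW hφ⟩‖ ≤ 2 * lam * ‖φ‖)

include a1 a2 in
lemma spair (u : ↥W) ⦃φ : H⦄ (hφ : φ ∈ D) :
    pInner (A u + B u) φ = pInner (u : H) (A ⟨φ, hDW hφ⟩ + B ⟨φ, hDW hφ⟩) := by
  rw [pInner_add_left, pInner_add_right, a1 u hφ, a2 u hφ]
  ring

include hdense hlam a1 a2 sbD in
lemma sbW (u : ↥W) : ‖A u + B u‖ ≤ 2 * lam * ‖(u : H)‖ := by
  set s := A u + B u with hs
  have key : ∀ ε : ℝ, 0 < ε →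
      ‖s‖ ^ 2 ≤ 2 * lam * ‖(u : H)‖ * ‖s‖ + ε * (2 * lam * ‖(u : H)‖ + ‖s‖) := by
    intro ε hε
    obtain ⟨φ, hφD, hφn⟩ := Metric.mem_closure_iff.mp (hdense s) ε hε
    have hdist : ‖s - φ‖ < ε := by rwa [dist_eq_norm] at hφn
    have e1 : pInner s s = pInner s φ + pInner s (s - φ) := by
      rw [pInner_sub_right]; ring
    have e2 : pInner s φ = pInner (u : H) (A ⟨φ, hDW hφD⟩ + B ⟨φ, hDW hφD⟩) :=
      spair a1 a2 u hφD
    have b2 : ‖pInner s φ‖ ≤ ‖(u : H)‖ * (2 * lam * ‖φ‖) := by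
      rw [e2]
      exact le_trans (norm_pInner_le _ _)
        (mul_le_mul_of_nonneg_left (sbD hφD) (norm_nonneg _))
    have b3 : ‖φ‖ ≤ ‖s‖ + ε := by
      have h4 : ‖s - (s - φ)‖ ≤ ‖s‖ + ‖s - φ‖ := norm_sub_le _ _
      simp only [sub_sub_cancel] at h4
      linarith
    have b4 : (pInner s (s - φ)).re ≤ ‖s‖ * ε := by
      have := pInner_re_le s (s - φ)
      nlinarith [norm_nonneg s]
    have b5 : (pInner s φ).re ≤ ‖pInner s φ‖ := by
      have h2 : |(pInner s φ).re| ≤ ‖pInner s φ‖ := by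
        exact Complex.abs_re_le_norm _
      exact le_trans (le_abs_self _) h2
    have b6 : ‖s‖ ^ 2 = (pInner s s).re := (pInner_self_re s).symm
    have b7 : ‖(u : H)‖ * (2 * lam * ‖φ‖) ≤ ‖(u : H)‖ * (2 * lam * (‖s‖ + ε)) := by
      have : 2 * lam * ‖φ‖ ≤ 2 * lam * (‖s‖ + ε) := by nlinarith [hlam]
      exact mul_le_mul_of_nonneg_left this (norm_nonneg _)
    rw [b6, e1, Complex.add_re]
    nlinarith [norm_nonneg ((u : H)), norm_nonneg s, hlam.le]
  have key2 : ‖s‖ ^ 2 ≤ 2 * lam * ‖(u : H)‖ * ‖s‖ := by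
    by_contra hc
    push_neg at hc
    set gap := ‖s‖ ^ 2 - 2 * lam * ‖(u : H)‖ * ‖s‖ with hgap
    have hgappos : 0 < gap := by simp only [hgap]; linarith
    set M := 2 * lam * ‖(u : H)‖ + ‖s‖ + 1 with hM
    have hMpos : 0 < M := by positivity
    have hkey := key (gap / M) (by positivity)
    have hfrac : gap / M * (2 * lam * ‖(u : H)‖ + ‖s‖) < gap := by
      rw [div_mul_eq_mul_div, div_lt_iff₀ hMpos]
      nlinarith [hgappos]
    linarith
  rcases eq_or_ne ‖s‖ 0 with h0 | h0
  · rw [h0]; positivity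
  · have hspos : 0 < ‖s‖ := lt_of_le_of_ne (norm_nonneg s) (Ne.symm h0)
    nlinarith [key2]

include hdense hlam a1 a2 sbD in
lemma ssymW (u v : ↥W) :
    pInner (A u + B u) ((v : H)) = pInner ((u : H)) (A v + B v) := by
  have sb' : ∀ w : ↥W, ‖A w + B w‖ ≤ 2 * lam * ‖(w : H)‖ := sbW hdense hlam a1 a2 sbD
  by_contra hne
  set d := pInner (A u + B u) ((v : H)) - pInner ((u : H)) (A v + B v) with hd
  have hpos : 0 < ‖d‖ := norm_pos_iff.mpr (sub_ne_zero.mpr hne)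
  set C := ‖A u + B u‖ + 2 * lam * ‖(u : H)‖ with hC
  have hCnn : 0 ≤ C := by positivity
  have key : ‖d‖ ≤ ‖d‖ / (C + 1) * C := by
    set ε := ‖d‖ / (C + 1) with hε
    have hεpos : 0 < ε := by positivity
    obtain ⟨φ, hφD, hφn⟩ := Metric.mem_closure_iff.mp (hdense ((v : H))) ε hεpos
    have hdist : ‖(v : H) - φ‖ < ε := by rwa [dist_eq_norm] at hφn
    set φW : ↥W := (⟨φ, hDW hφD⟩ : ↥W) with hφW
    have e1 : pInner (A u + B u) ((v : H))
        = pInner (A u + B u) φ + pInner (A u + B u) ((v : H) - φ) := by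
      rw [pInner_sub_right]; ring
    have e2 : pInner (A u + B u) φ = pInner ((u : H)) (A φW + B φW) :=
      spair a1 a2 u hφD
    have e3 : (A (v - φW) + B (v - φW)) = (A v + B v) - (A φW + B φW) := by
      rw [_root_.map_sub, _root_.map_sub]; abel
    have e4 : pInner ((u : H)) (A v + B v)
        = pInner ((u : H)) (A φW + B φW) + pInner ((u : H)) (A (v - φW) + B (v - φW)) := by
      rw [e3, pInner_sub_right]; ring
    have e5 : d = pInner (A u + B u) ((v : H) - φ)
        - pInner ((u : H)) (A (v - φW) + B (v - φW)) := by
      rw [hd, e1, e4, e2]; ring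
    have b1 : ‖pInner (A u + B u) ((v : H) - φ)‖ ≤ ‖A u + B u‖ * ε :=
      le_trans (norm_pInner_le _ _)
        (mul_le_mul_of_nonneg_left hdist.le (norm_nonneg _))
    have b2 : ‖pInner ((u : H)) (A (v - φW) + B (v - φW))‖ ≤ ‖(u : H)‖ * (2 * lam * ε) := by
      refine le_trans (norm_pInner_le _ _) (mul_le_mul_of_nonneg_left ?_ (norm_nonneg _))
      refine le_trans (sb' (v - φW)) ?_
      have hcoe : ((v - φW : ↥W) : H) = (v : H) - φ := rfl
      rw [hcoe]
      nlinarith [hlam]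
    calc ‖d‖ ≤ ‖pInner (A u + B u) ((v : H) - φ)‖
        + ‖pInner ((u : H)) (A (v - φW) + B (v - φW))‖ := by
          rw [e5]; exact norm_sub_le _ _
      _ ≤ ‖A u + B u‖ * ε + ‖(u : H)‖ * (2 * lam * ε) := add_le_add b1 b2
      _ = ε * C := by rw [hC]; ring
      _ = ‖d‖ / (C + 1) * C := rfl
  have hlt : ‖d‖ / (C + 1) * C < ‖d‖ := by
    rw [div_mul_eq_mul_div, div_lt_iff₀ (by positivity : (0:ℝ) < C + 1)]
    nlinarith [hpos]
  exact absurd (lt_of_le_of_lt key hlt) (lt_irrefl _)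

set_option maxHeartbeats 1000000 in
include hdense hlam hmu a1 a2 sbD in
lemma scW
    (scD : ∀ ⦃φ : H⦄ (hφ : φ ∈ D),
      2 * mu * ‖φ‖ ^ 2 ≤ (pInner (A ⟨φ, hDW hφ⟩ + B ⟨φ, hDW hφ⟩) φ).re)
    (u : ↥W) : 2 * mu * ‖(u : H)‖ ^ 2 ≤ (pInner (A u + B u) ((u : H))).re := by
  have sb' : ∀ w : ↥W, ‖A w + B w‖ ≤ 2 * lam * ‖(w : H)‖ := sbW hdense hlam a1 a2 sbD
  obtain ⟨K, hK, hKnn⟩ : ∃ K : ℝ, K = 2 * lam * ‖(u : H)‖ + 2 * lam * (‖(u : H)‖ + 1)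
      + 2 * mu * (2 * ‖(u : H)‖ + 3) ∧ 0 < K :=
    ⟨_, rfl, by positivity⟩
  have key : ∀ ε : ℝ, 0 < ε → ε ≤ 1 →
      2 * mu * ‖(u : H)‖ ^ 2 ≤ (pInner (A u + B u) ((u : H))).re + ε * K := by
    intro ε hε hε1
    obtain ⟨φ, hφD, hφn⟩ := Metric.mem_closure_iff.mp (hdense ((u : H))) ε hε
    have hdist : ‖(u : H) - φ‖ < ε := by rwa [dist_eq_norm] at hφn
    have hφb2 : ‖φ‖ ≤ ‖(u : H)‖ + ε := by
      have h4 : ‖(u : H) - ((u : H) - φ)‖ ≤ ‖(u : H)‖ + ‖(u : H) - φ‖ := norm_sub_le _ _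
      simp only [sub_sub_cancel] at h4
      linarith
    set φW : ↥W := (⟨φ, hDW hφD⟩ : ↥W) with hφW
    set dW : ↥W := u - φW with hdW
    have hcoe : ((dW : ↥W) : H) = (u : H) - φ := rfl
    have e0 : A u + B u = (A dW + B dW) + (A φW + B φW) := by
      rw [hdW, _root_.map_sub, _root_.map_sub]; abel
    have e1 : pInner (A u + B u) ((u : H))
        = pInner (A dW + B dW) ((u : H)) + pInner (A φW + B φW) ((u : H) - φ)
          + pInner (A φW + B φW) φ := by
      rw [e0, pInner_add_left, pInner_sub_right]; ring
    have f2 : -(2 * lam * ‖(u : H)‖ * ε) ≤ (pInner (A dW + B dW) ((u : H))).re := by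
      have h1 := pInner_re_ge (A dW + B dW) ((u : H))
      have h2 : ‖A dW + B dW‖ ≤ 2 * lam * ε := by
        refine le_trans (sb' dW) ?_
        rw [hcoe]
        nlinarith [hlam]
      have h3 : ‖A dW + B dW‖ * ‖(u : H)‖ ≤ 2 * lam * ε * ‖(u : H)‖ :=
        mul_le_mul_of_nonneg_right h2 (norm_nonneg _)
      nlinarith [h1, h3]
    have f3 : -((2 * lam * (‖(u : H)‖ + 1)) * ε) ≤ (pInner (A φW + B φW) ((u : H) - φ)).re := by
      have h1 := pInner_re_ge (A φW + B φW) ((u : H) - φ)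
      have h2 : ‖A φW + B φW‖ ≤ 2 * lam * (‖(u : H)‖ + 1) := by
        refine le_trans (sb' φW) ?_
        have hφb : ‖φ‖ ≤ ‖(u : H)‖ + 1 := by
          have h4 : ‖(u : H) - ((u : H) - φ)‖ ≤ ‖(u : H)‖ + ‖(u : H) - φ‖ := norm_sub_le _ _
          simp only [sub_sub_cancel] at h4
          linarith
        nlinarith [hlam]
      have h3 : ‖A φW + B φW‖ * ‖(u : H) - φ‖ ≤ 2 * lam * (‖(u : H)‖ + 1) * ε :=
        mul_le_mul h2 hdist.le (norm_nonneg _) (by positivity)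
      linarith [h1, h3]
    have f4 : 2 * mu * ‖φ‖ ^ 2 ≤ (pInner (A φW + B φW) φ).re := scD hφD
    have f5 : ‖(u : H)‖ ≤ ‖φ‖ + ε := by
      have h4 : ‖φ + ((u : H) - φ)‖ ≤ ‖φ‖ + ‖(u : H) - φ‖ := norm_add_le _ _
      simp only [add_sub_cancel] at h4
      linarith
    have f6 : ‖(u : H)‖ ^ 2 ≤ ‖φ‖ ^ 2 + ε * (2 * ‖(u : H)‖ + 3) := by
      have hm : ‖(u : H)‖ * ‖(u : H)‖ ≤ (‖φ‖ + ε) * (‖φ‖ + ε) :=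
        mul_le_mul f5 f5 (norm_nonneg _) (by positivity)
      nlinarith [hφb2, hε.le, hε1, mul_le_mul_of_nonneg_left hφb2 hε.le]
    have h6' : 2 * mu * ‖(u : H)‖ ^ 2
        ≤ 2 * mu * (‖φ‖ ^ 2 + ε * (2 * ‖(u : H)‖ + 3)) :=
      mul_le_mul_of_nonneg_left f6 (by positivity)
    have hKe : ε * K = ε * (2 * lam * ‖(u : H)‖) + ε * (2 * lam * (‖(u : H)‖ + 1))
        + ε * (2 * mu * (2 * ‖(u : H)‖ + 3)) := by rw [hK]; ring
    rw [e1, Complex.add_re, Complex.add_re]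
    nlinarith [f2, f3, f4, h6', hKe]
  by_contra hc
  push_neg at hc
  obtain ⟨gap, hgap, hgappos⟩ : ∃ g : ℝ,
      g = 2 * mu * ‖(u : H)‖ ^ 2 - (pInner (A u + B u) ((u : H))).re ∧ 0 < g :=
    ⟨_, rfl, by linarith⟩
  have hK0 : K ≠ 0 := ne_of_gt hKnn
  obtain ⟨ε, hεpos, hε1, hεK⟩ : ∃ ε : ℝ, 0 < ε ∧ ε ≤ 1 ∧ ε * K ≤ gap / 2 := by
    refine ⟨min 1 (gap / (2 * K)), lt_min one_pos (by positivity), min_le_left _ _, ?_⟩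
    calc min 1 (gap / (2 * K)) * K ≤ gap / (2 * K) * K :=
        mul_le_mul_of_nonneg_right (min_le_right _ _) hKnn.le
      _ = gap / 2 := by field_simp
  have hthis := key ε hεpos hε1
  rw [hgap] at hεK
  linarith [hthis, hεK]

end SDerive

section Master

variable {hDW : D ≤ W}

set_option maxHeartbeats 1000000 in
/-- The key lemma: if `A` restricted to `V` is accretive with `ran (I + A|_V) = H`, then any
`v₀` in the graph space that is boundary-orthogonal to `V` (in the sense `[u|v₀] = 0` for
all `u ∈ V`) satisfies `Re [v₀|v₀] ≤ 0`. -/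
lemma lemB (st : Setup W D hDW A B lam mu) (V : Set ↥W)
    (acc : ∀ u ∈ V, 0 ≤ (pInner (A u) ((u : H))).re)
    (sur : ∀ f : H, ∃ u ∈ V, (u : H) + A u = f)
    (v₀ : ↥W) (orth : ∀ u ∈ V, bf A B u v₀ = 0) :
    (bf A B v₀ v₀).re ≤ 0 := by
  by_contra hlt
  push_neg at hlt
  obtain ⟨δ, hδ, hδpos⟩ : ∃ δ : ℝ, δ = (bf A B v₀ v₀).re / 2 ∧ 0 < δ :=
    ⟨_, rfl, by linarith⟩
  have hden : 0 < 1 + lam := by linarith [st.lam_pos]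
  obtain ⟨φ, hφD, hφn⟩ := Metric.mem_closure_iff.mp (st.hdense ((v₀ : H)))
      (Real.sqrt (δ / (1 + lam))) (Real.sqrt_pos.mpr (by positivity))
  have hdist : ‖(v₀ : H) - φ‖ < Real.sqrt (δ / (1 + lam)) := by
    rwa [dist_eq_norm] at hφn
  have hsq : ‖(v₀ : H) - φ‖ ^ 2 < δ / (1 + lam) := by
    have h1 := Real.sq_sqrt (le_of_lt (show (0:ℝ) < δ / (1 + lam) by positivity))
    nlinarith [norm_nonneg ((v₀ : H) - φ), Real.sqrt_nonneg (δ / (1 + lam))]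
  set v : ↥W := v₀ - ⟨φ, hDW hφD⟩ with hv
  have hvcoe : ((v : ↥W) : H) = (v₀ : H) - φ := rfl
  have hbfv : bf A B v v = bf A B v₀ v₀ := by
    simp only [hv, bf_sub_left, bf_sub_right, st.bf_phi_right v₀ hφD,
      st.bf_phi_left v₀ hφD, st.bf_phi_right (⟨φ, hDW hφD⟩ : ↥W) hφD]
    ring
  have horth : ∀ u ∈ V, pInner (A u) ((v : H)) = pInner ((u : H)) (B v) := by
    intro u hu
    have h1 : bf A B u v = 0 := by
      rw [hv, bf_sub_right, orth u hu, st.bf_phi_right u hφD]; ring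
    have h1' : pInner (A u) ((v : H)) - pInner ((u : H)) (B v) = 0 := h1
    exact sub_eq_zero.mp h1'
  obtain ⟨u, huV, huf⟩ := sur ((v : H) + B v)
  have hA0 : 0 ≤ (pInner ((v : H) + B v) ((v : H))).re := by
    have e1 : pInner ((v : H) + B v) ((v : H)) = pInner ((u : H) + A u) ((v : H)) := by
      rw [huf]
    have e2 : pInner ((u : H) + A u) ((v : H)) = pInner ((u : H)) ((v : H) + B v) := by
      rw [pInner_add_left, pInner_add_right, horth u huV]
    have e3 : pInner ((u : H)) ((v : H) + B v) = pInner ((u : H)) ((u : H) + A u) := by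
      rw [huf]
    have e4 : (pInner ((u : H)) ((u : H) + A u)).re
        = (pInner ((u : H) + A u) ((u : H))).re := pInner_re_comm _ _
    rw [e1, e2, e3, e4, pInner_add_left, Complex.add_re, pInner_self_re]
    linarith [acc u huV, sq_nonneg ‖(u : H)‖]
  have hupper : (pInner ((v : H) + B v) ((v : H))).re < 0 := by
    have hS := st.sb v
    have hrebf : (bf A B v v).re
        = (pInner (A v) ((v : H))).re - (pInner (B v) ((v : H))).re := by
      have h1 : (pInner ((v : H)) (B v)).re = (pInner (B v) ((v : H))).re :=
        pInner_re_comm _ _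
      simp only [bf, Complex.sub_re, h1]
    have hreS : (pInner (A v + B v) ((v : H))).re
        = (pInner (A v) ((v : H))).re + (pInner (B v) ((v : H))).re := by
      rw [pInner_add_left, Complex.add_re]
    have hSre : (pInner (A v + B v) ((v : H))).re ≤ 2 * lam * ‖(v : H)‖ ^ 2 := by
      have h2 := pInner_re_le (A v + B v) ((v : H))
      nlinarith [hS, norm_nonneg ((v : H))]
    have hvnorm : ‖((v : H))‖ ^ 2 < δ / (1 + lam) := by rw [hvcoe]; exact hsq
    have h3 : (1 + lam) * ‖((v : H))‖ ^ 2 < δ := by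
      have h4 := mul_lt_mul_of_pos_left hvnorm hden
      rwa [mul_div_cancel₀ _ (ne_of_gt hden)] at h4
    have h2δ : (bf A B v v).re = 2 * δ := by rw [hbfv, hδ]; ring
    rw [pInner_add_left, Complex.add_re, pInner_self_re]
    linarith [hrebf, hreS, hSre, h3, h2δ]
  exact absurd hA0 (not_le.mpr hupper)

lemma pInner_neg_right (x y : H) : pInner x (-y) = -pInner x y := by
  simp [pInner]

set_option maxHeartbeats 1000000 in
/-- Master theorem, forward direction: an m-accretive realisation satisfies the abstract
(V)-boundary conditions. -/
lemma master_mp (st : Setup W D hDW A B lam mu) (V : Set ↥W)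
    (hVD : ∀ ⦃φ : H⦄ (hφ : φ ∈ D), (⟨φ, hDW hφ⟩ : ↥W) ∈ V)
    (hVadd : ∀ {a b : ↥W}, a ∈ V → b ∈ V → a + b ∈ V)
    (hVsmul : ∀ (c : ℂ) {a : ↥W}, a ∈ V → c • a ∈ V)
    (acc : ∀ u ∈ V, 0 ≤ (pInner (A u) ((u : H))).re)
    (sur : ∀ f : H, ∃ u ∈ V, (u : H) + A u = f) :
    (∀ u ∈ V, 0 ≤ (bf A B u u).re) ∧ (∀ v ∈ ios A B V, (bf A B v v).re ≤ 0) ∧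
      V = ios A B (ios A B V) := by
  have hVsub : ∀ {a b : ↥W}, a ∈ V → b ∈ V → a - b ∈ V := by
    intro a b ha hb
    have h := hVadd ha (hVsmul (-1) hb)
    simpa [neg_one_smul, sub_eq_add_neg] using h
  -- Step 1: `ios V ⊆ W⁻`.
  have step1 : ∀ v₀ ∈ ios A B V, (bf A B v₀ v₀).re ≤ 0 := by
    intro v₀ hv₀
    refine lemB st V acc sur v₀ (fun u hu => ?_)
    rw [st.bf_conj u v₀, hv₀ u hu, RingHom.map_zero]
  -- uniqueness of solutions
  have uniq : ∀ u ∈ V, ∀ u' ∈ V, (u : H) + A u = (u' : H) + A u' → u = u' := by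
    intro u hu u' hu' he
    have hd : u - u' ∈ V := hVsub hu hu'
    have h0 : ((u - u' : ↥W) : H) + A (u - u') = 0 := by
      rw [_root_.map_sub, Submodule.coe_sub]
      calc ((u : H) - (u' : H)) + (A u - A u')
          = ((u : H) + A u) - ((u' : H) + A u') := by abel
        _ = 0 := by rw [he, sub_self]
    have hAd : A (u - u') = -(((u - u' : ↥W)) : H) := eq_neg_of_add_eq_zero_right h0
    have hacc := acc _ hd
    rw [hAd, pInner_neg_left, Complex.neg_re, pInner_self_re] at hacc
    have h5 : ((u - u' : ↥W) : H) = 0 := by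
      have h6 : ‖((u - u' : ↥W) : H)‖ = 0 := by nlinarith [norm_nonneg ((u - u' : ↥W) : H)]
      exact norm_eq_zero.mp h6
    have h7 : (u : H) = (u' : H) := by
      rw [Submodule.coe_sub] at h5
      exact sub_eq_zero.mp h5
    exact Subtype.ext h7
  -- the solution operator and its adjoint
  choose Rf hRmem hReq using sur
  have hRval : ∀ u ∈ V, Rf ((u : H) + A u) = u := fun u hu => uniq _ (hRmem _) u hu (hReq _)
  have hmap_add : ∀ f g : H, ((Rf (f + g) : ↥W) : H) = ((Rf f : ↥W) : H) + ((Rf g : ↥W) : H) := by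
    intro f g
    have h1 : ((Rf f + Rf g : ↥W) : H) + A (Rf f + Rf g) = f + g := by
      rw [_root_.map_add, Submodule.coe_add]
      calc (((Rf f : ↥W) : H) + ((Rf g : ↥W) : H)) + (A (Rf f) + A (Rf g))
          = (((Rf f : ↥W) : H) + A (Rf f)) + (((Rf g : ↥W) : H) + A (Rf g)) := by abel
        _ = f + g := by rw [hReq f, hReq g]
    have h2 := uniq _ (hRmem (f + g)) _ (hVadd (hRmem f) (hRmem g)) (by rw [hReq (f + g), h1])
    rw [h2, Submodule.coe_add]
  have hmap_smul : ∀ (c : ℂ) (f : H), ((Rf (c • f) : ↥W) : H) = c • ((Rf f : ↥W) : H) := by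
    intro c f
    have h1 : ((c • Rf f : ↥W) : H) + A (c • Rf f) = c • f := by
      rw [LinearMap.map_smul, Submodule.coe_smul, ← smul_add, hReq f]
    have h2 := uniq _ (hRmem (c • f)) _ (hVsmul c (hRmem f)) (by rw [hReq (c • f), h1])
    rw [h2, Submodule.coe_smul]
  have hbound : ∀ f : H, ‖((Rf f : ↥W) : H)‖ ≤ 1 * ‖f‖ := by
    intro f
    have h1 : ‖((Rf f : ↥W) : H)‖ ^ 2 ≤ (pInner f (((Rf f : ↥W)) : H)).re := by
      have e := hReq f
      calc ‖((Rf f : ↥W) : H)‖ ^ 2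
          ≤ (pInner (((Rf f : ↥W) : H) + A (Rf f)) (((Rf f : ↥W)) : H)).re := by
            rw [pInner_add_left, Complex.add_re, pInner_self_re]
            linarith [acc _ (hRmem f)]
        _ = (pInner f (((Rf f : ↥W)) : H)).re := by rw [e]
    have h2 := pInner_re_le f (((Rf f : ↥W)) : H)
    rcases eq_or_ne ‖((Rf f : ↥W) : H)‖ 0 with h0 | h0
    · rw [h0]; positivity
    · have hp : 0 < ‖((Rf f : ↥W) : H)‖ := lt_of_le_of_ne (norm_nonneg _) (Ne.symm h0)
      nlinarith
  set Rlin : H →ₗ[ℂ] H :=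
    { toFun := fun f => ((Rf f : ↥W) : H)
      map_add' := hmap_add
      map_smul' := hmap_smul } with hRlin
  set Rc : H →L[ℂ] H := Rlin.mkContinuous 1 hbound with hRc
  have hRcval : ∀ f : H, Rc f = ((Rf f : ↥W) : H) := fun f => rfl
  set Rs : H →L[ℂ] H := ContinuousLinearMap.adjoint Rc with hRs
  have padj : ∀ x y : H, pInner x (Rs y) = pInner (Rc x) y := fun x y =>
    ContinuousLinearMap.adjoint_inner_left Rc x y
  -- surjectivity of `1 + B` on `ios V`
  have surB : ∀ f : H, ∃ v ∈ ios A B V, (v : H) + B v = f := by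
    intro f
    have key : ∀ u ∈ V, pInner (A u) (Rs f) = pInner ((u : H)) (f - Rs f) := by
      intro u hu
      have h1 : Rc (A u) = (u : H) - Rc ((u : H)) := by
        have e1 : Rc ((u : H) + A u) = (u : H) := by
          rw [hRcval, hRval u hu]
        have e2 : Rc ((u : H) + A u) = Rc ((u : H)) + Rc (A u) := map_add _ _ _
        rw [e2] at e1
        exact eq_sub_of_add_eq' e1
      rw [padj (A u) f, h1, pInner_sub_left, pInner_sub_right, ← padj ((u : H)) f]
    have hmem : Rs f ∈ W := by
      apply st.memA (Rs f) ‖f - Rs f‖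
      intro φ hφ
      have h1 := key _ (hVD hφ)
      have h2 : pInner (Rs f) (A ⟨φ, hDW hφ⟩)
          = starRingEnd ℂ (pInner (A ⟨φ, hDW hφ⟩) (Rs f)) := (pInner_conj _ _).symm
      rw [h2, h1, RCLike.norm_conj, mul_comm]
      exact norm_pInner_le _ _
    have hBv : B ⟨Rs f, hmem⟩ = f - Rs f := by
      apply st.ext_pInner
      intro φ hφ
      rw [st.a2 (⟨Rs f, hmem⟩ : ↥W) hφ]
      show pInner (Rs f) (A ⟨φ, hDW hφ⟩) = _
      rw [← pInner_conj (A ⟨φ, hDW hφ⟩) (Rs f), key _ (hVD hφ), pInner_conj]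
    have hios : (⟨Rs f, hmem⟩ : ↥W) ∈ ios A B V := by
      intro u hu
      rw [st.bf_conj (⟨Rs f, hmem⟩ : ↥W) u]
      have h1 : bf A B u ⟨Rs f, hmem⟩ = 0 := by
        show pInner (A u) (Rs f) - pInner ((u : H)) (B ⟨Rs f, hmem⟩) = 0
        rw [hBv, key u hu, sub_self]
      rw [h1, RingHom.map_zero]
    refine ⟨⟨Rs f, hmem⟩, hios, ?_⟩
    show Rs f + B ⟨Rs f, hmem⟩ = f
    rw [hBv]; abel
  -- accretivity of `B` on `ios V`
  have accB : ∀ v ∈ ios A B V, 0 ≤ (pInner (B v) ((v : H))).re := by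
    intro v hv
    have h1 := step1 v hv
    have h2 := st.sc v
    have h3 := st.re_bf v
    have h4 : (pInner (A v + B v) ((v : H))).re
        = (pInner (A v) ((v : H))).re + (pInner (B v) ((v : H))).re := by
      rw [pInner_add_left, Complex.add_re]
    linarith [mul_nonneg st.mu_pos.le (sq_nonneg ‖(v : H)‖)]
  -- Step 3: `ios (ios V) ⊆ W⁺`.
  have step3 : ∀ w ∈ ios A B (ios A B V), 0 ≤ (bf A B w w).re := by
    intro w hw
    have horth : ∀ v ∈ ios A B V, bf B A v w = 0 := by
      intro v hv
      have h1 : bf A B w v = 0 := hw v hv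
      have h2 : starRingEnd ℂ (pInner (A w) ((v : H)) - pInner ((w : H)) (B v))
          = pInner ((v : H)) (A w) - pInner (B v) ((w : H)) := by
        rw [_root_.map_sub, pInner_conj, pInner_conj]
      have h3 : pInner (A w) ((v : H)) - pInner ((w : H)) (B v) = 0 := h1
      rw [h3, RingHom.map_zero] at h2
      show pInner (B v) ((w : H)) - pInner ((v : H)) (A w) = 0
      linear_combination h2
    have h := lemB st.swap (ios A B V) accB surB w horth
    have h2 := st.re_bf_swap w
    linarith
  -- Step 4: `V ⊆ ios (ios V)`.
  have step4 : V ⊆ ios A B (ios A B V) := by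
    intro u hu v hv
    rw [st.bf_conj u v, hv u hu, RingHom.map_zero]
  -- Step 5: `ios (ios V) ⊆ V`.
  have step5 : ios A B (ios A B V) ⊆ V := by
    intro w hw
    obtain ⟨u, hu, hueq⟩ : ∃ u ∈ V, (u : H) + A u = (w : H) + A w :=
      ⟨Rf _, hRmem _, hReq _⟩
    have hz : w - u ∈ ios A B (ios A B V) := by
      intro v hv
      rw [bf_sub_left, hw v hv, step4 hu v hv, sub_self]
    have hAz : A (w - u) = -(((w - u : ↥W)) : H) := by
      rw [_root_.map_sub, Submodule.coe_sub]
      calc A w - A u = ((w : H) + A w) - ((u : H) + A u) - ((w : H) - (u : H)) := by abel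
        _ = -((w : H) - (u : H)) := by rw [← hueq, sub_self, zero_sub]
    have h0 : 0 ≤ (bf A B (w - u) (w - u)).re := step3 _ hz
    have hrebf := st.re_bf (w - u)
    have hS := st.sc (w - u)
    have h1 : (pInner (A (w - u)) (((w - u : ↥W)) : H)).re
        = -‖(((w - u : ↥W)) : H)‖ ^ 2 := by
      rw [hAz, pInner_neg_left, Complex.neg_re, pInner_self_re]
    have h2 : ‖(((w - u : ↥W)) : H)‖ ^ 2 = 0 := by
      have hmuterm := mul_nonneg st.mu_pos.le (sq_nonneg ‖(((w - u : ↥W)) : H)‖)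
      nlinarith [sq_nonneg ‖(((w - u : ↥W)) : H)‖]
    have h3 : ((w - u : ↥W) : H) = 0 :=
      norm_eq_zero.mp (pow_eq_zero_iff two_ne_zero |>.mp h2)
    have h4 : w = u := by
      rw [Submodule.coe_sub] at h3
      exact Subtype.ext (sub_eq_zero.mp h3)
    rw [h4]; exact hu
  exact ⟨fun u hu => step3 u (step4 hu), step1, Set.Subset.antisymm step4 step5⟩

set_option maxHeartbeats 1000000 in
/-- Master theorem, reverse direction: the abstract (V)-boundary conditions imply
m-accretivity of the realisation. -/
lemma master_mpr (st : Setup W D hDW A B lam mu) (V : Set ↥W)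
    (hVD : ∀ ⦃φ : H⦄ (hφ : φ ∈ D), (⟨φ, hDW hφ⟩ : ↥W) ∈ V)
    (hVadd : ∀ {a b : ↥W}, a ∈ V → b ∈ V → a + b ∈ V)
    (hVsmul : ∀ (c : ℂ) {a : ↥W}, a ∈ V → c • a ∈ V)
    (h1 : ∀ u ∈ V, 0 ≤ (bf A B u u).re)
    (h2 : ∀ v ∈ ios A B V, (bf A B v v).re ≤ 0)
    (h3 : V = ios A B (ios A B V)) :
    (∀ u ∈ V, 0 ≤ (pInner (A u) ((u : H))).re) ∧
      (∀ f : H, ∃ u ∈ V, (u : H) + A u = f) := by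
  have hVsub : ∀ {a b : ↥W}, a ∈ V → b ∈ V → a - b ∈ V := by
    intro a b ha hb
    have h := hVadd ha (hVsmul (-1) hb)
    simpa [neg_one_smul, sub_eq_add_neg] using h
  have acc : ∀ u ∈ V, 0 ≤ (pInner (A u) ((u : H))).re := by
    intro u hu
    have ha := st.re_bf u
    have hb := st.sc u
    have hc := h1 u hu
    linarith [mul_nonneg st.mu_pos.le (sq_nonneg ‖(u : H)‖)]
  refine ⟨acc, ?_⟩
  have coer : ∀ u ∈ V, ‖(u : H)‖ ≤ ‖(u : H) + A u‖ := by
    intro u hu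
    have hre : ‖(u : H)‖ ^ 2 ≤ (pInner ((u : H) + A u) ((u : H))).re := by
      rw [pInner_add_left, Complex.add_re, pInner_self_re]
      linarith [acc u hu]
    have hle := pInner_re_le ((u : H) + A u) ((u : H))
    rcases eq_or_ne ‖(u : H)‖ 0 with h0 | h0
    · rw [h0]; positivity
    · have hp : 0 < ‖(u : H)‖ := lt_of_le_of_ne (norm_nonneg _) (Ne.symm h0)
      nlinarith
  -- the range of `1 + A` restricted to `V`, as a submodule
  set M : Submodule ℂ H :=
    { carrier := {x | ∃ u ∈ V, (u : H) + A u = x}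
      add_mem' := by
        rintro a b ⟨u, hu, rfl⟩ ⟨w, hw, rfl⟩
        exact ⟨u + w, hVadd hu hw, by rw [Submodule.coe_add, _root_.map_add]; abel⟩
      zero_mem' := by
        refine ⟨0, ?_, by simp⟩
        have h0 : ((⟨0, hDW (zero_mem D)⟩ : ↥W)) = 0 := Subtype.ext rfl
        rw [← h0]; exact hVD (zero_mem D)
      smul_mem' := by
        rintro c x ⟨u, hu, rfl⟩
        exact ⟨c • u, hVsmul c hu,
          by rw [Submodule.coe_smul, LinearMap.map_smul, smul_add]⟩ } with hMdef
  -- density of `M`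
  have horthM : ∀ g : H, (∀ u ∈ V, pInner g ((u : H) + A u) = 0) → g = 0 := by
    intro g hg
    have hg2 : ∀ u ∈ V, pInner ((u : H) + A u) g = 0 := by
      intro u hu
      rw [← pInner_conj g ((u : H) + A u), hg u hu, RingHom.map_zero]
    have hmem : g ∈ W := by
      apply st.memA g ‖g‖
      intro φ hφ
      have h4 := hg _ (hVD hφ)
      have h5 : pInner g (A ⟨φ, hDW hφ⟩) = -pInner g φ := by
        rw [pInner_add_right] at h4
        linear_combination h4
      rw [h5, norm_neg]
      exact norm_pInner_le g φ
    have hBg : B ⟨g, hmem⟩ = -g := by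
      apply st.ext_pInner
      intro φ hφ
      rw [st.a2 (⟨g, hmem⟩ : ↥W) hφ]
      show pInner g (A ⟨φ, hDW hφ⟩) = _
      have h4 := hg _ (hVD hφ)
      rw [pInner_add_right] at h4
      rw [pInner_neg_left]
      linear_combination h4
    have hgios : (⟨g, hmem⟩ : ↥W) ∈ ios A B V := by
      intro u hu
      rw [st.bf_conj (⟨g, hmem⟩ : ↥W) u]
      have hbf : bf A B u ⟨g, hmem⟩ = 0 := by
        show pInner (A u) g - pInner ((u : H)) (B ⟨g, hmem⟩) = 0
        rw [hBg, pInner_neg_right]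
        have h6 := hg2 u hu
        rw [pInner_add_left] at h6
        linear_combination h6
      rw [hbf, RingHom.map_zero]
    have hminus := h2 _ hgios
    have hrebf := st.re_bf (⟨g, hmem⟩ : ↥W)
    have hsc := st.sc (⟨g, hmem⟩ : ↥W)
    obtain ⟨sg, hsg⟩ : ∃ z, z = A (⟨g, hmem⟩ : ↥W) + B ⟨g, hmem⟩ := ⟨_, rfl⟩
    have hAg : A (⟨g, hmem⟩ : ↥W) = sg + g := by rw [hsg, hBg]; abel
    have hre1 : (pInner (A (⟨g, hmem⟩ : ↥W)) g).re = (pInner sg g).re + ‖g‖ ^ 2 := by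
      rw [hAg, pInner_add_left, Complex.add_re, pInner_self_re]
    have hcoe : ((⟨g, hmem⟩ : ↥W) : H) = g := rfl
    rw [hcoe, ← hsg] at hrebf hsc
    have hnorm : ‖g‖ ^ 2 = 0 := by
      nlinarith [mul_nonneg st.mu_pos.le (sq_nonneg ‖g‖), sq_nonneg ‖g‖]
    exact norm_eq_zero.mp (pow_eq_zero_iff two_ne_zero |>.mp hnorm)
  have hMdense : Dense (M : Set H) := by
    rw [Submodule.dense_iff_topologicalClosure_eq_top,
      Submodule.topologicalClosure_eq_top_iff, Submodule.eq_bot_iff]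
    intro g hgmem
    refine horthM g (fun u hu => ?_)
    exact (Submodule.mem_orthogonal M g).mp hgmem _ ⟨u, hu, rfl⟩
  intro f
  obtain ⟨x, hx, hlim⟩ := mem_closure_iff_seq_limit.mp (hMdense f)
  have hx' : ∀ n : ℕ, ∃ u, u ∈ V ∧ (u : H) + A u = x n := fun n => hx n
  choose us hus husx using hx'
  have hcau : CauchySeq (fun n => ((us n : ↥W) : H)) := by
    have hXc : CauchySeq x := hlim.cauchySeq
    refine Metric.cauchySeq_iff.mpr ?_
    intro ε hε
    obtain ⟨N, hN⟩ := Metric.cauchySeq_iff.mp hXc ε hε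
    refine ⟨N, fun m hm n hn => lt_of_le_of_lt ?_ (hN m hm n hn)⟩
    rw [dist_eq_norm, dist_eq_norm]
    have hsub : ((us m : ↥W) : H) - ((us n : ↥W) : H) = ((us m - us n : ↥W) : H) := by
      rw [Submodule.coe_sub]
    rw [hsub]
    have hco := coer _ (hVsub (hus m) (hus n))
    refine le_trans hco (le_of_eq ?_)
    rw [_root_.map_sub, Submodule.coe_sub, ← husx m, ← husx n]
    abel
  obtain ⟨xlim, hxlim⟩ := cauchySeq_tendsto_of_complete hcau
  have hA : Tendsto (fun n => A (us n)) atTop (𝓝 (f - xlim)) := by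
    have he : (fun n => A (us n)) = fun n => x n - ((us n : ↥W) : H) := by
      funext n
      rw [← husx n]
      abel
    rw [he]
    exact hlim.sub hxlim
  have hval : ∀ ⦃φ : H⦄ (hφ : φ ∈ D),
      pInner xlim (B ⟨φ, hDW hφ⟩) = pInner (f - xlim) φ := by
    intro φ hφ
    have hlim1 : Tendsto (fun n => pInner (((us n : ↥W)) : H) (B ⟨φ, hDW hφ⟩)) atTop
        (𝓝 (pInner xlim (B ⟨φ, hDW hφ⟩))) := tendsto_const_nhds.inner hxlim
    have heq1 : (fun n => pInner (((us n : ↥W)) : H) (B ⟨φ, hDW hφ⟩))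
        = fun n => pInner (A (us n)) φ := funext fun n => (st.a1 (us n) hφ).symm
    rw [heq1] at hlim1
    have hlim2 : Tendsto (fun n => pInner (A (us n)) φ) atTop
        (𝓝 (pInner (f - xlim) φ)) := tendsto_const_nhds.inner hA
    exact tendsto_nhds_unique hlim1 hlim2
  have hxW : xlim ∈ W := by
    apply st.memB xlim ‖f - xlim‖
    intro φ hφ
    rw [hval hφ]
    exact norm_pInner_le _ _
  have hAx : A (⟨xlim, hxW⟩ : ↥W) = f - xlim := by
    apply st.ext_pInner
    intro φ hφ
    rw [st.a1 (⟨xlim, hxW⟩ : ↥W) hφ]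
    exact hval hφ
  have husios : ∀ n, us n ∈ ios A B (ios A B V) := fun n => h3 ▸ hus n
  have hxV : (⟨xlim, hxW⟩ : ↥W) ∈ V := by
    rw [h3]
    intro v hv
    have hl1 : Tendsto (fun n => pInner (A (us n)) ((v : H))
          - pInner (((us n : ↥W)) : H) (B v)) atTop
        (𝓝 (pInner (f - xlim) ((v : H)) - pInner xlim (B v))) :=
      (tendsto_const_nhds.inner hA).sub (tendsto_const_nhds.inner hxlim)
    have hl2 : (fun n => pInner (A (us n)) ((v : H)) - pInner (((us n : ↥W)) : H) (B v))
        = fun _ => (0 : ℂ) := funext fun n => husios n v hv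
    rw [hl2] at hl1
    have h0 := tendsto_nhds_unique hl1 tendsto_const_nhds
    show pInner (A (⟨xlim, hxW⟩ : ↥W)) ((v : H)) - pInner ((⟨xlim, hxW⟩ : ↥W) : H) (B v) = 0
    rw [hAx]
    exact h0
  refine ⟨⟨xlim, hxW⟩, hxV, ?_⟩
  show xlim + A (⟨xlim, hxW⟩ : ↥W) = f
  rw [hAx]
  abel

end Master

section Inst

lemma re_ofNat_mul (z : ℂ) : ((2 : ℂ) * z).re = 2 * z.re := by
  have h : (2 : ℂ) = ((2 : ℝ) : ℂ) := by norm_num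
  rw [h, Complex.re_ofReal_mul]

lemma re_inv_two_mul (z : ℂ) : ((2 : ℂ)⁻¹ * z).re = z.re / 2 := by
  have h : (2 : ℂ)⁻¹ = (((2 : ℝ)⁻¹ : ℝ) : ℂ) := by norm_num
  rw [h, Complex.re_ofReal_mul]
  ring

variable (T0 T0t : H →ₗ.[ℂ] H)

/-- `T₁` as a linear map on the graph space. -/
def A1 : ↥T0t.adjoint.domain →ₗ[ℂ] H := T0t.adjoint.toFun

variable (hW : T0t.adjoint.domain = T0.adjoint.domain)

/-- `T̃₁` as a linear map on the graph space. -/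
def B1 : ↥T0t.adjoint.domain →ₗ[ℂ] H :=
  T0.adjoint.toFun.comp (Submodule.inclusion hW.le)

lemma bf1_eq_bform (u v : ↥T0t.adjoint.domain) :
    bf (A1 T0t) (B1 T0 T0t hW) u v = bform T0 T0t hW u v := rfl

lemma ios1_eq_iorth (X : Set ↥T0t.adjoint.domain) :
    ios (A1 T0t) (B1 T0 T0t hW) X = iorth T0 T0t hW X := rfl

variable {lam mu : ℝ}

lemma friedrichs_setup (hF : IsFriedrichsPair T0 T0t lam mu)
    (hDW : T0.domain ≤ T0t.adjoint.domain) :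
    Setup T0t.adjoint.domain T0.domain hDW (A1 T0t) (B1 T0 T0t hW) lam mu := by
  have hd : Dense (T0.domain : Set H) := hF.dense'
  have hd' : Dense (T0t.domain : Set H) := hF.dom_eq ▸ hF.dense'
  have f1 : T0.IsFormalAdjoint T0t := by
    intro x y
    have h := congrArg (starRingEnd ℂ) (hF.sym x y)
    simpa [pInner] using h
  have hT0le : T0 ≤ T0t.adjoint := f1.symm.le_adjoint hd'
  have hT0tle : T0t ≤ T0.adjoint := f1.le_adjoint hd
  have hAφ : ∀ ⦃φ : H⦄ (hφ : φ ∈ T0.domain),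
      A1 T0t ⟨φ, hDW hφ⟩ = T0 ⟨φ, hφ⟩ := by
    intro φ hφ
    exact (hT0le.2 (x := ⟨φ, hφ⟩) (y := ⟨φ, hDW hφ⟩) rfl).symm
  have hBφ : ∀ ⦃φ : H⦄ (hφ : φ ∈ T0.domain),
      B1 T0 T0t hW ⟨φ, hDW hφ⟩ = T0t ⟨φ, hF.dom_eq.le hφ⟩ := by
    intro φ hφ
    exact (hT0tle.2 (x := ⟨φ, hF.dom_eq.le hφ⟩)
      (y := Submodule.inclusion hW.le ⟨φ, hDW hφ⟩) rfl).symm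
  have adj1 := LinearPMap.adjoint_isFormalAdjoint hd'
  have adj2 := LinearPMap.adjoint_isFormalAdjoint hd
  have ha1 : ∀ (u : ↥T0t.adjoint.domain) ⦃φ : H⦄ (hφ : φ ∈ T0.domain),
      pInner (A1 T0t u) φ = pInner (u : H) (B1 T0 T0t hW ⟨φ, hDW hφ⟩) := by
    intro u φ hφ
    rw [hBφ hφ]
    have h := congrArg (starRingEnd ℂ) (adj1 u ⟨φ, hF.dom_eq.le hφ⟩)
    simpa [pInner, A1] using h
  have ha2 : ∀ (u : ↥T0t.adjoint.domain) ⦃φ : H⦄ (hφ : φ ∈ T0.domain),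
      pInner (B1 T0 T0t hW u) φ = pInner (u : H) (A1 T0t ⟨φ, hDW hφ⟩) := by
    intro u φ hφ
    rw [hAφ hφ]
    have h := congrArg (starRingEnd ℂ) (adj2 (Submodule.inclusion hW.le u) ⟨φ, hφ⟩)
    simpa [pInner, B1] using h
  have memA : ∀ (x : H) (C : ℝ),
      (∀ ⦃φ : H⦄ (hφ : φ ∈ T0.domain), ‖pInner x (A1 T0t ⟨φ, hDW hφ⟩)‖ ≤ C * ‖φ‖) →
      x ∈ T0t.adjoint.domain := by
    intro x C hC
    have hx : x ∈ T0.adjoint.domain := by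
      rw [LinearPMap.mem_adjoint_domain_iff]
      apply AddMonoidHomClass.continuous_of_bound ((innerₛₗ ℂ x).comp T0.toFun) C
      intro φ
      have h1 := hC φ.2
      rw [hAφ φ.2] at h1
      have h2 : ‖((innerₛₗ ℂ x).comp T0.toFun) φ‖ = ‖pInner x (T0 ⟨(φ : H), φ.2⟩)‖ := by
        show ‖⟪x, T0 ⟨(φ : H), φ.2⟩⟫_ℂ‖ = ‖pInner x (T0 ⟨(φ : H), φ.2⟩)‖
        rw [pInner]
        exact norm_inner_symm _ _
      rw [h2]
      exact h1
    exact hW.symm ▸ hx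
  have memB : ∀ (x : H) (C : ℝ),
      (∀ ⦃φ : H⦄ (hφ : φ ∈ T0.domain), ‖pInner x (B1 T0 T0t hW ⟨φ, hDW hφ⟩)‖ ≤ C * ‖φ‖) →
      x ∈ T0t.adjoint.domain := by
    intro x C hC
    rw [LinearPMap.mem_adjoint_domain_iff]
    apply AddMonoidHomClass.continuous_of_bound ((innerₛₗ ℂ x).comp T0t.toFun) C
    intro ψ
    have hψD : (ψ : H) ∈ T0.domain := hF.dom_eq.ge ψ.2
    have h1 := hC hψD
    rw [hBφ hψD] at h1
    have hψeq : T0t ⟨(ψ : H), hF.dom_eq.le hψD⟩ = T0t ψ := rfl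
    rw [hψeq] at h1
    have h2 : ‖((innerₛₗ ℂ x).comp T0t.toFun) ψ‖ = ‖pInner x (T0t ψ)‖ := by
      show ‖⟪x, T0t ψ⟫_ℂ‖ = ‖pInner x (T0t ψ)‖
      rw [pInner]
      exact norm_inner_symm _ _
    rw [h2]
    exact h1
  have sbD : ∀ ⦃φ : H⦄ (hφ : φ ∈ T0.domain),
      ‖A1 T0t ⟨φ, hDW hφ⟩ + B1 T0 T0t hW ⟨φ, hDW hφ⟩‖ ≤ 2 * lam * ‖φ‖ := by
    intro φ hφ
    rw [hAφ hφ, hBφ hφ]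
    exact hF.bound φ hφ
  have scD : ∀ ⦃φ : H⦄ (hφ : φ ∈ T0.domain),
      2 * mu * ‖φ‖ ^ 2
        ≤ (pInner (A1 T0t ⟨φ, hDW hφ⟩ + B1 T0 T0t hW ⟨φ, hDW hφ⟩) φ).re := by
    intro φ hφ
    rw [hAφ hφ, hBφ hφ]
    exact hF.coercive φ hφ
  exact
    { hdense := hd
      lam_pos := hF.lam_pos
      mu_pos := hF.mu_pos
      a1 := ha1
      a2 := ha2
      memA := memA
      memB := memB
      sb := sbW hd hF.lam_pos ha1 ha2 sbD
      sc := scW hd hF.lam_pos hF.mu_pos ha1 ha2 sbD scD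
      ssym := ssymW hd hF.lam_pos ha1 ha2 sbD }

/-- `1 + 2L₁` as a linear map on the graph space. -/
def A2 : ↥T0t.adjoint.domain →ₗ[ℂ] H :=
  (T0t.adjoint.domain).subtype + (A1 T0t - B1 T0 T0t hW)

/-- `1 - 2L₁` as a linear map on the graph space. -/
def B2 : ↥T0t.adjoint.domain →ₗ[ℂ] H :=
  (T0t.adjoint.domain).subtype - (A1 T0t - B1 T0 T0t hW)

lemma A2_apply (u : ↥T0t.adjoint.domain) :
    A2 T0 T0t hW u = (u : H) + (A1 T0t u - B1 T0 T0t hW u) := rfl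

lemma B2_apply (u : ↥T0t.adjoint.domain) :
    B2 T0 T0t hW u = (u : H) - (A1 T0t u - B1 T0 T0t hW u) := rfl

variable {hDW : T0.domain ≤ T0t.adjoint.domain}

lemma bf2_eq (st1 : Setup T0t.adjoint.domain T0.domain hDW (A1 T0t) (B1 T0 T0t hW) lam mu)
    (u v : ↥T0t.adjoint.domain) :
    bf (A2 T0 T0t hW) (B2 T0 T0t hW) u v = 2 * bf (A1 T0t) (B1 T0 T0t hW) u v := by
  have hs := st1.ssym u v
  simp only [bf, A2_apply, B2_apply, pInner_add_left, pInner_sub_left,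
    pInner_add_right, pInner_sub_right]
  simp only [pInner_add_left, pInner_add_right] at hs
  linear_combination -hs

lemma ios2_eq (st1 : Setup T0t.adjoint.domain T0.domain hDW (A1 T0t) (B1 T0 T0t hW) lam mu)
    (X : Set ↥T0t.adjoint.domain) :
    ios (A2 T0 T0t hW) (B2 T0 T0t hW) X = ios (A1 T0t) (B1 T0 T0t hW) X := by
  ext u
  constructor
  · intro h v hv
    have h1 := h v hv
    rw [bf2_eq T0 T0t hW st1] at h1
    have h2 : (2 : ℂ) ≠ 0 := two_ne_zero
    exact (mul_eq_zero.mp h1).resolve_left h2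
  · intro h v hv
    rw [bf2_eq T0 T0t hW st1, h v hv, mul_zero]

set_option maxHeartbeats 1000000 in
lemma setup2 (st1 : Setup T0t.adjoint.domain T0.domain hDW (A1 T0t) (B1 T0 T0t hW) lam mu) :
    Setup T0t.adjoint.domain T0.domain hDW (A2 T0 T0t hW) (B2 T0 T0t hW) 1 1 := by
  have hcoeφ : ∀ ⦃φ : H⦄ (hφ : φ ∈ T0.domain),
      ((⟨φ, hDW hφ⟩ : ↥T0t.adjoint.domain) : H) = φ := fun φ hφ => rfl
  refine
    { hdense := st1.hdense
      lam_pos := one_pos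
      mu_pos := one_pos
      a1 := ?_
      a2 := ?_
      memA := ?_
      memB := ?_
      sb := ?_
      sc := ?_
      ssym := ?_ }
  · intro u φ hφ
    simp only [A2_apply, B2_apply, pInner_add_left, pInner_sub_left, pInner_add_right,
      pInner_sub_right, st1.a1 u hφ, st1.a2 u hφ, hcoeφ hφ]
    ring
  · intro u φ hφ
    simp only [A2_apply, B2_apply, pInner_add_left, pInner_sub_left, pInner_add_right,
      pInner_sub_right, st1.a1 u hφ, st1.a2 u hφ, hcoeφ hφ]
    ring
  · intro x C hC
    apply st1.memA x ((C + ‖x‖ + 2 * lam * ‖x‖) / 2)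
    intro φ hφ
    have key : 2 * pInner x (A1 T0t ⟨φ, hDW hφ⟩)
        = (pInner x (A2 T0 T0t hW ⟨φ, hDW hφ⟩) - pInner x φ)
          + pInner x (A1 T0t ⟨φ, hDW hφ⟩ + B1 T0 T0t hW ⟨φ, hDW hφ⟩) := by
      simp only [A2_apply, pInner_add_right, pInner_sub_right, hcoeφ hφ]
      ring
    have hsb := st1.sb (⟨φ, hDW hφ⟩ : ↥T0t.adjoint.domain)
    rw [hcoeφ hφ] at hsb
    have hS : ‖pInner x (A1 T0t ⟨φ, hDW hφ⟩ + B1 T0 T0t hW ⟨φ, hDW hφ⟩)‖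
        ≤ ‖x‖ * (2 * lam * ‖φ‖) :=
      le_trans (norm_pInner_le _ _) (mul_le_mul_of_nonneg_left hsb (norm_nonneg _))
    have hφn : ‖pInner x φ‖ ≤ ‖x‖ * ‖φ‖ := norm_pInner_le _ _
    have hA2 := hC hφ
    have h2 : ‖2 * pInner x (A1 T0t ⟨φ, hDW hφ⟩)‖
        ≤ C * ‖φ‖ + ‖x‖ * ‖φ‖ + ‖x‖ * (2 * lam * ‖φ‖) := by
      rw [key]
      refine le_trans (norm_add_le _ _) ?_
      have h5 : ‖pInner x (A2 T0 T0t hW ⟨φ, hDW hφ⟩) - pInner x φ‖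
          ≤ C * ‖φ‖ + ‖x‖ * ‖φ‖ := le_trans (norm_sub_le _ _) (add_le_add hA2 hφn)
      linarith
    rw [norm_mul, (by norm_num : ‖(2 : ℂ)‖ = 2)] at h2
    linarith
  · intro x C hC
    apply st1.memB x ((C + ‖x‖ + 2 * lam * ‖x‖) / 2)
    intro φ hφ
    have key : 2 * pInner x (B1 T0 T0t hW ⟨φ, hDW hφ⟩)
        = (pInner x (B2 T0 T0t hW ⟨φ, hDW hφ⟩) - pInner x φ)
          + pInner x (A1 T0t ⟨φ, hDW hφ⟩ + B1 T0 T0t hW ⟨φ, hDW hφ⟩) := by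
      simp only [B2_apply, pInner_add_right, pInner_sub_right, hcoeφ hφ]
      ring
    have hsb := st1.sb (⟨φ, hDW hφ⟩ : ↥T0t.adjoint.domain)
    rw [hcoeφ hφ] at hsb
    have hS : ‖pInner x (A1 T0t ⟨φ, hDW hφ⟩ + B1 T0 T0t hW ⟨φ, hDW hφ⟩)‖
        ≤ ‖x‖ * (2 * lam * ‖φ‖) :=
      le_trans (norm_pInner_le _ _) (mul_le_mul_of_nonneg_left hsb (norm_nonneg _))
    have hφn : ‖pInner x φ‖ ≤ ‖x‖ * ‖φ‖ := norm_pInner_le _ _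
    have hB2 := hC hφ
    have h2 : ‖2 * pInner x (B1 T0 T0t hW ⟨φ, hDW hφ⟩)‖
        ≤ C * ‖φ‖ + ‖x‖ * ‖φ‖ + ‖x‖ * (2 * lam * ‖φ‖) := by
      rw [key]
      refine le_trans (norm_add_le _ _) ?_
      have h5 : ‖pInner x (B2 T0 T0t hW ⟨φ, hDW hφ⟩) - pInner x φ‖
          ≤ C * ‖φ‖ + ‖x‖ * ‖φ‖ := le_trans (norm_sub_le _ _) (add_le_add hB2 hφn)
      linarith
    rw [norm_mul, (by norm_num : ‖(2 : ℂ)‖ = 2)] at h2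
    linarith
  · intro u
    have hid : A2 T0 T0t hW u + B2 T0 T0t hW u = (u : H) + (u : H) := by
      rw [A2_apply, B2_apply]; abel
    rw [hid]
    calc ‖(u : H) + (u : H)‖ ≤ ‖(u : H)‖ + ‖(u : H)‖ := norm_add_le _ _
      _ = 2 * 1 * ‖(u : H)‖ := by ring
  · intro u
    have hid : A2 T0 T0t hW u + B2 T0 T0t hW u = (u : H) + (u : H) := by
      rw [A2_apply, B2_apply]; abel
    rw [hid, pInner_add_left, Complex.add_re, pInner_self_re]
    linarith [sq_nonneg ‖(u : H)‖]
  · intro u v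
    have hidu : A2 T0 T0t hW u + B2 T0 T0t hW u = (u : H) + (u : H) := by
      rw [A2_apply, B2_apply]; abel
    have hidv : A2 T0 T0t hW v + B2 T0 T0t hW v = (v : H) + (v : H) := by
      rw [A2_apply, B2_apply]; abel
    rw [hidu, hidv, pInner_add_left, pInner_add_right]

end Inst

end AFr

/-- Theorem 3.2: for a realisation `T₀ ⊆ T ⊆ T₁`, the following are equivalent:
(i) `T` is m-accretive; (ii) `L := L₁|_{dom T}` is m-accretive;
(iii) `dom T` satisfies the (V)-boundary conditions. -/
theorem mAccretive_iff_skew_mAccretive_iff_VBC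
    (T0 T0t : H →ₗ.[ℂ] H) (lam mu : ℝ) (hF : IsFriedrichsPair T0 T0t lam mu)
    (hW : T0t.adjoint.domain = T0.adjoint.domain)
    (T : H →ₗ.[ℂ] H) (hT0T : T0 ≤ T) (hTT1 : T ≤ T0t.adjoint) :
    (((∀ u : T.domain, 0 ≤ (pInner (T u) (u : H)).re) ∧
        (∀ f : H, ∃ u : T.domain, (u : H) + T u = f)) ↔
      ((∀ u : T.domain,
          0 ≤ (pInner ((2 : ℂ)⁻¹ • (T0t.adjoint ⟨(u : H), hTT1.1 u.2⟩
                - T0.adjoint ⟨(u : H), hW.le (hTT1.1 u.2)⟩)) (u : H)).re) ∧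
        (∀ f : H, ∃ u : T.domain,
          (u : H) + (2 : ℂ)⁻¹ • (T0t.adjoint ⟨(u : H), hTT1.1 u.2⟩
              - T0.adjoint ⟨(u : H), hW.le (hTT1.1 u.2)⟩) = f))) ∧
    (((∀ u : T.domain,
          0 ≤ (pInner ((2 : ℂ)⁻¹ • (T0t.adjoint ⟨(u : H), hTT1.1 u.2⟩
                - T0.adjoint ⟨(u : H), hW.le (hTT1.1 u.2)⟩)) (u : H)).re) ∧
        (∀ f : H, ∃ u : T.domain,
          (u : H) + (2 : ℂ)⁻¹ • (T0t.adjoint ⟨(u : H), hTT1.1 u.2⟩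
              - T0.adjoint ⟨(u : H), hW.le (hTT1.1 u.2)⟩) = f)) ↔
      VBC T0 T0t hW {w : ↥T0t.adjoint.domain | (w : H) ∈ T.domain}) := by
  have hDW : T0.domain ≤ T0t.adjoint.domain := le_trans hT0T.1 hTT1.1
  have st1 := AFr.friedrichs_setup T0 T0t hW hF hDW
  have st2 := AFr.setup2 T0 T0t hW st1
  set V : Set ↥T0t.adjoint.domain := {w : ↥T0t.adjoint.domain | (w : H) ∈ T.domain} with hVdef
  have hVD : ∀ ⦃φ : H⦄ (hφ : φ ∈ T0.domain),
      (⟨φ, hDW hφ⟩ : ↥T0t.adjoint.domain) ∈ V := fun φ hφ => hT0T.1 hφ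
  have hVadd : ∀ {a b : ↥T0t.adjoint.domain}, a ∈ V → b ∈ V → a + b ∈ V := by
    intro a b ha hb
    exact T.domain.add_mem ha hb
  have hVsmul : ∀ (c : ℂ) {a : ↥T0t.adjoint.domain}, a ∈ V → c • a ∈ V := by
    intro c a ha
    exact T.domain.smul_mem c ha
  have hTA : ∀ (u : ↥T0t.adjoint.domain) (hu : (u : H) ∈ T.domain),
      T ⟨(u : H), hu⟩ = AFr.A1 T0t u := fun u hu => hTT1.2 rfl
  have hbfre : ∀ w : ↥T0t.adjoint.domain,
      (pInner (AFr.A1 T0t w - AFr.B1 T0 T0t hW w) ((w : H))).re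
        = (AFr.bf (AFr.A1 T0t) (AFr.B1 T0 T0t hW) w w).re := by
    intro w
    rw [pInner_sub_left]
    have h2 : (pInner ((w : H)) (AFr.B1 T0 T0t hW w)).re
        = (pInner (AFr.B1 T0 T0t hW w) ((w : H))).re := pInner_re_comm _ _
    simp only [AFr.bf, Complex.sub_re, h2]
  have hre : ∀ w : ↥T0t.adjoint.domain,
      (pInner ((2 : ℂ)⁻¹ • (AFr.A1 T0t w - AFr.B1 T0 T0t hW w)) ((w : H))).re
        = (AFr.bf (AFr.A1 T0t) (AFr.B1 T0 T0t hW) w w).re / 2 := by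
    intro w
    rw [pInner_smul_left, AFr.re_inv_two_mul, hbfre w]
  have hA2id : ∀ w : ↥T0t.adjoint.domain,
      (w : H) + AFr.A2 T0 T0t hW w
        = (2 : ℂ) • ((w : H) + (2 : ℂ)⁻¹ • (AFr.A1 T0t w - AFr.B1 T0 T0t hW w)) := by
    intro w
    rw [AFr.A2_apply, smul_add, smul_smul,
      show (2 : ℂ) * (2 : ℂ)⁻¹ = 1 by norm_num, one_smul, two_smul]
    abel
  -- (i) ↔ VBC
  have iff_i : ((∀ u : T.domain, 0 ≤ (pInner (T u) (u : H)).re) ∧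
      (∀ f : H, ∃ u : T.domain, (u : H) + T u = f)) ↔ VBC T0 T0t hW V := by
    constructor
    · rintro ⟨hacc, hsur⟩
      have acc : ∀ u ∈ V, 0 ≤ (pInner (AFr.A1 T0t u) ((u : H))).re := by
        intro u hu
        have h := hacc ⟨(u : H), hu⟩
        rwa [hTA u hu] at h
      have sur : ∀ f : H, ∃ u ∈ V, (u : H) + AFr.A1 T0t u = f := by
        intro f
        obtain ⟨u, hu⟩ := hsur f
        refine ⟨⟨(u : H), hTT1.1 u.2⟩, u.2, ?_⟩
        have h3 : AFr.A1 T0t ⟨(u : H), hTT1.1 u.2⟩ = T u := (hTA _ u.2).symm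
        rw [h3]
        exact hu
      obtain ⟨m1, m2, m3⟩ := AFr.master_mp st1 V hVD hVadd hVsmul acc sur
      exact ⟨fun u hu => m1 u hu, fun v hv => m2 v hv, m3⟩
    · rintro ⟨h1, h2, h3⟩
      obtain ⟨acc, sur⟩ := AFr.master_mpr st1 V hVD hVadd hVsmul
        (fun u hu => h1 hu) (fun v hv => h2 hv) h3
      constructor
      · intro u
        have h := acc ⟨(u : H), hTT1.1 u.2⟩ u.2
        have h3' : AFr.A1 T0t ⟨(u : H), hTT1.1 u.2⟩ = T u := (hTA _ u.2).symm
        rwa [h3'] at h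
      · intro f
        obtain ⟨u, huV, hue⟩ := sur f
        refine ⟨⟨(u : H), huV⟩, ?_⟩
        rw [hTA u huV]
        exact hue
  -- (ii) ↔ VBC
  have iff_ii : ((∀ u : T.domain,
        0 ≤ (pInner ((2 : ℂ)⁻¹ • (T0t.adjoint ⟨(u : H), hTT1.1 u.2⟩
              - T0.adjoint ⟨(u : H), hW.le (hTT1.1 u.2)⟩)) (u : H)).re) ∧
      (∀ f : H, ∃ u : T.domain,
        (u : H) + (2 : ℂ)⁻¹ • (T0t.adjoint ⟨(u : H), hTT1.1 u.2⟩
            - T0.adjoint ⟨(u : H), hW.le (hTT1.1 u.2)⟩) = f)) ↔ VBC T0 T0t hW V := by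
    constructor
    · rintro ⟨hacc, hsur⟩
      have acc2 : ∀ u ∈ V, 0 ≤ (pInner (AFr.A2 T0 T0t hW u) ((u : H))).re := by
        intro u hu
        have h : 0 ≤ (pInner ((2 : ℂ)⁻¹ • (AFr.A1 T0t u - AFr.B1 T0 T0t hW u))
            ((u : H))).re := hacc ⟨(u : H), hu⟩
        rw [hre u] at h
        rw [AFr.A2_apply, pInner_add_left, Complex.add_re, pInner_self_re, hbfre u]
        linarith [sq_nonneg ‖(u : H)‖]
      have sur2 : ∀ f : H, ∃ u ∈ V, (u : H) + AFr.A2 T0 T0t hW u = f := by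
        intro f
        obtain ⟨u, hu⟩ := hsur ((2 : ℂ)⁻¹ • f)
        refine ⟨⟨(u : H), hTT1.1 u.2⟩, u.2, ?_⟩
        have hue : ((⟨(u : H), hTT1.1 u.2⟩ : ↥T0t.adjoint.domain) : H)
            + (2 : ℂ)⁻¹ • (AFr.A1 T0t ⟨(u : H), hTT1.1 u.2⟩
              - AFr.B1 T0 T0t hW ⟨(u : H), hTT1.1 u.2⟩) = (2 : ℂ)⁻¹ • f := hu
        have h5 := hA2id ⟨(u : H), hTT1.1 u.2⟩
        rw [hue, smul_smul, show (2 : ℂ) * (2 : ℂ)⁻¹ = 1 by norm_num, one_smul] at h5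
        exact h5
      obtain ⟨m1, m2, m3⟩ := AFr.master_mp st2 V hVD hVadd hVsmul acc2 sur2
      refine ⟨?_, ?_, ?_⟩
      · intro u hu
        have h := m1 u hu
        rw [AFr.bf2_eq T0 T0t hW st1, AFr.re_ofNat_mul] at h
        have h' : 0 ≤ (AFr.bf (AFr.A1 T0t) (AFr.B1 T0 T0t hW) u u).re := by linarith
        exact h'
      · intro v hv
        have hv' : v ∈ AFr.ios (AFr.A2 T0 T0t hW) (AFr.B2 T0 T0t hW) V := by
          rw [AFr.ios2_eq T0 T0t hW st1]
          exact hv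
        have h := m2 v hv'
        rw [AFr.bf2_eq T0 T0t hW st1, AFr.re_ofNat_mul] at h
        have h' : (AFr.bf (AFr.A1 T0t) (AFr.B1 T0 T0t hW) v v).re ≤ 0 := by linarith
        exact h'
      · rw [AFr.ios2_eq T0 T0t hW st1, AFr.ios2_eq T0 T0t hW st1] at m3
        exact m3
    · rintro ⟨h1, h2, h3⟩
      have h1' : ∀ u ∈ V, 0 ≤ (AFr.bf (AFr.A2 T0 T0t hW) (AFr.B2 T0 T0t hW) u u).re := by
        intro u hu
        rw [AFr.bf2_eq T0 T0t hW st1, AFr.re_ofNat_mul]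
        have h4 : 0 ≤ (AFr.bf (AFr.A1 T0t) (AFr.B1 T0 T0t hW) u u).re := h1 hu
        linarith
      have h2' : ∀ v ∈ AFr.ios (AFr.A2 T0 T0t hW) (AFr.B2 T0 T0t hW) V,
          (AFr.bf (AFr.A2 T0 T0t hW) (AFr.B2 T0 T0t hW) v v).re ≤ 0 := by
        intro v hv
        rw [AFr.ios2_eq T0 T0t hW st1] at hv
        rw [AFr.bf2_eq T0 T0t hW st1, AFr.re_ofNat_mul]
        have h4 : (AFr.bf (AFr.A1 T0t) (AFr.B1 T0 T0t hW) v v).re ≤ 0 := h2 hv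
        linarith
      have h3' : V = AFr.ios (AFr.A2 T0 T0t hW) (AFr.B2 T0 T0t hW)
          (AFr.ios (AFr.A2 T0 T0t hW) (AFr.B2 T0 T0t hW) V) := by
        rw [AFr.ios2_eq T0 T0t hW st1, AFr.ios2_eq T0 T0t hW st1]
        exact h3
      obtain ⟨acc2, sur2⟩ := AFr.master_mpr st2 V hVD hVadd hVsmul h1' h2' h3'
      constructor
      · intro u
        have hu : (⟨(u : H), hTT1.1 u.2⟩ : ↥T0t.adjoint.domain) ∈ V := u.2
        have hb : 0 ≤ (AFr.bf (AFr.A1 T0t) (AFr.B1 T0 T0t hW)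
            ⟨(u : H), hTT1.1 u.2⟩ ⟨(u : H), hTT1.1 u.2⟩).re := h1 hu
        show 0 ≤ (pInner ((2 : ℂ)⁻¹ • (AFr.A1 T0t ⟨(u : H), hTT1.1 u.2⟩
            - AFr.B1 T0 T0t hW ⟨(u : H), hTT1.1 u.2⟩))
            ((⟨(u : H), hTT1.1 u.2⟩ : ↥T0t.adjoint.domain) : H)).re
        rw [hre]
        linarith
      · intro f
        obtain ⟨u, huV, hue⟩ := sur2 ((2 : ℂ) • f)
        refine ⟨⟨(u : H), huV⟩, ?_⟩
        show (u : H) + (2 : ℂ)⁻¹ • (AFr.A1 T0t u - AFr.B1 T0 T0t hW u) = f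
        have h5 := hA2id u
        rw [hue] at h5
        have h6 := congrArg (fun x => (2 : ℂ)⁻¹ • x) h5
        simp only [smul_smul, show ((2 : ℂ))⁻¹ * 2 = 1 by norm_num, one_smul] at h6
        exact h6.symm
  exact ⟨iff_i.trans iff_ii.symm, iff_ii⟩
end
end

section
/- Let (T0, T̃0) be a joint pair of abstract Friedrichs operators on a complex Hilbert space H and let V be a subspace of the graph space W satisfying (V)-boundary conditions. Then W = V ∔ ker T1 (direct sum); if p2 : W → W denotes the projection onto ker T1 along V, then the operator M ∈ L(W;W') defined by M u := D(u − 2 p2 u) satisfies (M)-boundary conditions and ker(D − M) = V. -/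
set_option linter.unusedSectionVars false
set_option maxHeartbeats 1000000


open scoped InnerProductSpace
open Filter Topology LinearPMap

noncomputable section

variable {H : Type*} [NormedAddCommGroup H] [InnerProductSpace ℂ H] [CompleteSpace H]

namespace FriAux

variable {T0 T0t : H →ₗ.[ℂ] H} {lam mu : ℝ}

lemma hd2 (hF : IsDualPairT12 T0 T0t lam) : Dense (T0t.domain : Set H) :=
  hF.dom_eq ▸ hF.dense'

lemma symc (hF : IsDualPairT12 T0 T0t lam) (φ : T0.domain) (ψ : T0t.domain) :
    ⟪T0 φ, (ψ : H)⟫_ℂ = ⟪(φ : H), T0t ψ⟫_ℂ := by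
  have h := hF.sym φ ψ
  unfold pInner at h
  rw [← inner_conj_symm, h, inner_conj_symm]

lemma adj_ext {S : H →ₗ.[ℂ] H} (hd : Dense (S.domain : Set H)) {x f : H}
    (h : ∀ ψ : S.domain, ⟪f, (ψ : H)⟫_ℂ = ⟪x, S ψ⟫_ℂ) :
    ∃ hx : x ∈ S.adjoint.domain, S.adjoint ⟨x, hx⟩ = f := by
  have hx : x ∈ S.adjoint.domain := LinearPMap.mem_adjoint_domain_of_exists x ⟨f, h⟩
  exact ⟨hx, LinearPMap.adjoint_apply_eq hd ⟨x, hx⟩ h⟩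

lemma D_subset_W (hF : IsDualPairT12 T0 T0t lam) (x : H) (hx : x ∈ T0.domain) :
    ∃ h1 : x ∈ T0t.adjoint.domain, T0t.adjoint ⟨x, h1⟩ = T0 ⟨x, hx⟩ :=
  adj_ext (hd2 hF) (fun ψ => symc hF ⟨x, hx⟩ ψ)

/-- `T̃₁` as a linear map on the graph space. -/
def TtL (T0 T0t : H →ₗ.[ℂ] H) (hW : T0t.adjoint.domain = T0.adjoint.domain) :
    ↥T0t.adjoint.domain →ₗ[ℂ] H :=
  T0.adjoint.toFun ∘ₗ Submodule.inclusion hW.le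

lemma TtL_apply (hW : T0t.adjoint.domain = T0.adjoint.domain) (u : ↥T0t.adjoint.domain) :
    TtL T0 T0t hW u = T0.adjoint ⟨(u : H), hW.le u.2⟩ := rfl

/-- `G = T₁ + T̃₁` pointwise. -/
def Gop (T0 T0t : H →ₗ.[ℂ] H) (hW : T0t.adjoint.domain = T0.adjoint.domain)
    (u : ↥T0t.adjoint.domain) : H :=
  T0t.adjoint u + TtL T0 T0t hW u

/-- `S = T₀ + T̃₀` on the common domain. -/
def SD (T0 T0t : H →ₗ.[ℂ] H) (hd : T0.domain = T0t.domain) (x : T0.domain) : H :=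
  T0 x + T0t ⟨(x : H), hd.le x.2⟩

lemma SD_sym (hF : IsDualPairT12 T0 T0t lam) (x y : T0.domain) :
    ⟪SD T0 T0t hF.dom_eq x, (y : H)⟫_ℂ = ⟪(x : H), SD T0 T0t hF.dom_eq y⟫_ℂ := by
  have h1 : ⟪T0 x, ((y : H))⟫_ℂ = ⟪(x : H), T0t ⟨(y : H), hF.dom_eq.le y.2⟩⟫_ℂ :=
    symc hF x ⟨(y : H), hF.dom_eq.le y.2⟩
  have h2 : ⟪T0t ⟨(x : H), hF.dom_eq.le x.2⟩, (y : H)⟫_ℂ = ⟪(x : H), T0 y⟫_ℂ := by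
    rw [← inner_conj_symm, ← symc hF y ⟨(x : H), hF.dom_eq.le x.2⟩, inner_conj_symm]
  simp only [SD, inner_add_left, inner_add_right, h1, h2]
  ring

lemma SD_sub (hd : T0.domain = T0t.domain) (x y : T0.domain) :
    SD T0 T0t hd x - SD T0 T0t hd y = SD T0 T0t hd (x - y) := by
  have h : (⟨((x - y : T0.domain) : H), hd.le (x - y).2⟩ : T0t.domain)
      = ⟨(x : H), hd.le x.2⟩ - ⟨(y : H), hd.le y.2⟩ := by
    ext; simp
  simp only [SD, h, LinearPMap.map_sub]
  abel

lemma SD_bound (hF : IsDualPairT12 T0 T0t lam) (x : T0.domain) :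
    ‖SD T0 T0t hF.dom_eq x‖ ≤ 2 * lam * ‖(x : H)‖ :=
  hF.bound (x : H) x.2

lemma SD_coer (hF : IsFriedrichsPair T0 T0t lam mu) (x : T0.domain) :
    2 * mu * ‖(x : H)‖ ^ 2 ≤ (⟪(x : H), SD T0 T0t hF.dom_eq x⟫_ℂ).re :=
  hF.coercive (x : H) x.2

lemma seq_approx (hF : IsDualPairT12 T0 T0t lam) (u : H) :
    ∃ φ : ℕ → T0.domain, Tendsto (fun n => ((φ n : H))) atTop (𝓝 u) := by
  obtain ⟨f, hf, hlim⟩ := mem_closure_iff_seq_limit.mp (hF.dense' u)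
  exact ⟨fun n => ⟨f n, hf n⟩, hlim⟩

lemma fa_sum (hF : IsFriedrichsPair T0 T0t lam mu)
    (hW : T0t.adjoint.domain = T0.adjoint.domain) (u : ↥T0t.adjoint.domain) (χ : T0.domain) :
    ⟪Gop T0 T0t hW u, (χ : H)⟫_ℂ = ⟪(u : H), SD T0 T0t hF.dom_eq χ⟫_ℂ := by
  unfold Gop SD
  rw [TtL_apply, inner_add_left, inner_add_right]
  rw [LinearPMap.adjoint_isFormalAdjoint (hd2 hF.toIsDualPairT12) u
    ⟨(χ : H), hF.dom_eq.le χ.2⟩]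
  rw [LinearPMap.adjoint_isFormalAdjoint hF.dense' ⟨(u : H), hW.le u.2⟩ χ]
  ring

lemma lemG (hF : IsFriedrichsPair T0 T0t lam mu)
    (hW : T0t.adjoint.domain = T0.adjoint.domain) (u : ↥T0t.adjoint.domain)
    (φ : ℕ → T0.domain) (hφ : Tendsto (fun n => ((φ n : H))) atTop (𝓝 (u : H))) :
    Tendsto (fun n => SD T0 T0t hF.dom_eq (φ n)) atTop (𝓝 (Gop T0 T0t hW u)) := by
  have hlam := hF.lam_pos
  have hcs : CauchySeq (fun n => ((φ n : H))) := hφ.cauchySeq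
  have hkey : ∀ n m : ℕ, dist (SD T0 T0t hF.dom_eq (φ n)) (SD T0 T0t hF.dom_eq (φ m))
      ≤ (2 * lam) * dist ((φ n : H)) ((φ m : H)) := by
    intro n m
    rw [dist_eq_norm, dist_eq_norm, SD_sub]
    have h := SD_bound hF.toIsDualPairT12 (φ n - φ m)
    simpa using h
  have hc2 : CauchySeq (fun n => SD T0 T0t hF.dom_eq (φ n)) := by
    rw [Metric.cauchySeq_iff] at hcs ⊢
    intro ε hε
    have h3 : (0:ℝ) < 2 * lam + 1 := by linarith
    obtain ⟨N, hN⟩ := hcs (ε / (2 * lam + 1)) (div_pos hε h3)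
    refine ⟨N, fun m hm n hn => lt_of_le_of_lt (hkey m n) ?_⟩
    have h1 := hN m hm n hn
    have h2 : (0:ℝ) ≤ dist ((φ m : H)) ((φ n : H)) := dist_nonneg
    have h4 : 2 * lam * dist ((φ m : H)) ((φ n : H)) ≤ (2 * lam + 1) * dist ((φ m : H)) ((φ n : H)) := by nlinarith
    calc 2 * lam * dist ((φ m : H)) ((φ n : H)) ≤ (2 * lam + 1) * dist ((φ m : H)) ((φ n : H)) := h4
      _ < (2 * lam + 1) * (ε / (2 * lam + 1)) := (mul_lt_mul_iff_right₀ h3).mpr h1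
      _ = ε := by field_simp
  obtain ⟨g, hg⟩ := cauchySeq_tendsto_of_complete hc2
  have hgu : Gop T0 T0t hW u = g := by
    apply hF.dense'.eq_of_inner_left ℂ
    intro χ' hχ'
    obtain ⟨χ, rfl⟩ : ∃ χ : T0.domain, (χ : H) = χ' := ⟨⟨χ', hχ'⟩, rfl⟩
    have h1 : ⟪Gop T0 T0t hW u, (χ : H)⟫_ℂ = ⟪(u : H), SD T0 T0t hF.dom_eq χ⟫_ℂ :=
      fa_sum hF hW u χ
    have h2 : Tendsto (fun n => ⟪SD T0 T0t hF.dom_eq (φ n), (χ : H)⟫_ℂ) atTop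
        (𝓝 ⟪g, (χ : H)⟫_ℂ) := hg.inner tendsto_const_nhds
    have h4 : Tendsto (fun n => ⟪((φ n : H)), SD T0 T0t hF.dom_eq χ⟫_ℂ) atTop
        (𝓝 ⟪(u : H), SD T0 T0t hF.dom_eq χ⟫_ℂ) := hφ.inner tendsto_const_nhds
    have h3 : ∀ n, ⟪SD T0 T0t hF.dom_eq (φ n), (χ : H)⟫_ℂ
        = ⟪((φ n : H)), SD T0 T0t hF.dom_eq χ⟫_ℂ :=
      fun n => SD_sym hF.toIsDualPairT12 (φ n) χ
    have h5 : ⟪(u : H), SD T0 T0t hF.dom_eq χ⟫_ℂ = ⟪g, (χ : H)⟫_ℂ :=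
      tendsto_nhds_unique h4 (h2.congr h3)
    rw [h1, h5]
  rwa [hgu]


lemma Gbound (hF : IsFriedrichsPair T0 T0t lam mu)
    (hW : T0t.adjoint.domain = T0.adjoint.domain) (u : ↥T0t.adjoint.domain) :
    ‖Gop T0 T0t hW u‖ ≤ 2 * lam * ‖(u : H)‖ := by
  obtain ⟨φ, hφ⟩ := seq_approx hF.toIsDualPairT12 (u : H)
  have hg := lemG hF hW u φ hφ
  have h1 : Tendsto (fun n => ‖SD T0 T0t hF.dom_eq (φ n)‖) atTop
      (𝓝 ‖Gop T0 T0t hW u‖) := hg.norm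
  have h2 : Tendsto (fun n => 2 * lam * ‖((φ n : H))‖) atTop (𝓝 (2 * lam * ‖(u : H)‖)) :=
    hφ.norm.const_mul _
  exact le_of_tendsto_of_tendsto' h1 h2 (fun n => SD_bound hF.toIsDualPairT12 (φ n))

lemma Gcoer (hF : IsFriedrichsPair T0 T0t lam mu)
    (hW : T0t.adjoint.domain = T0.adjoint.domain) (u : ↥T0t.adjoint.domain) :
    2 * mu * ‖(u : H)‖ ^ 2 ≤ (⟪(u : H), Gop T0 T0t hW u⟫_ℂ).re := by
  obtain ⟨φ, hφ⟩ := seq_approx hF.toIsDualPairT12 (u : H)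
  have hg := lemG hF hW u φ hφ
  have h1 : Tendsto (fun n => (⟪((φ n : H)), SD T0 T0t hF.dom_eq (φ n)⟫_ℂ).re) atTop
      (𝓝 ((⟪(u : H), Gop T0 T0t hW u⟫_ℂ).re)) :=
    (Complex.continuous_re.tendsto _).comp (hφ.inner hg)
  have h2 : Tendsto (fun n => 2 * mu * ‖((φ n : H))‖ ^ 2) atTop
      (𝓝 (2 * mu * ‖(u : H)‖ ^ 2)) := ((hφ.norm).pow 2).const_mul _
  exact le_of_tendsto_of_tendsto' h2 h1 (fun n => SD_coer hF (φ n))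

lemma Gsym (hF : IsFriedrichsPair T0 T0t lam mu)
    (hW : T0t.adjoint.domain = T0.adjoint.domain) (u v : ↥T0t.adjoint.domain) :
    ⟪Gop T0 T0t hW u, (v : H)⟫_ℂ = ⟪(u : H), Gop T0 T0t hW v⟫_ℂ := by
  obtain ⟨φ, hφ⟩ := seq_approx hF.toIsDualPairT12 (v : H)
  have hg := lemG hF hW v φ hφ
  have h1 : Tendsto (fun n => ⟪Gop T0 T0t hW u, ((φ n : H))⟫_ℂ) atTop
      (𝓝 ⟪Gop T0 T0t hW u, (v : H)⟫_ℂ) := tendsto_const_nhds.inner hφ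
  have h2 : Tendsto (fun n => ⟪(u : H), SD T0 T0t hF.dom_eq (φ n)⟫_ℂ) atTop
      (𝓝 ⟪(u : H), Gop T0 T0t hW v⟫_ℂ) := tendsto_const_nhds.inner hg
  exact tendsto_nhds_unique (h1.congr (fun n => fa_sum hF hW u (φ n))) h2

end FriAux

namespace FriAux
variable {T0 T0t : H →ₗ.[ℂ] H} {lam mu : ℝ}
variable {hW : T0t.adjoint.domain = T0.adjoint.domain}

lemma bform_eq' (hW : T0t.adjoint.domain = T0.adjoint.domain) (u v : ↥T0t.adjoint.domain) :
    bform T0 T0t hW u v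
      = ⟪(v : H), T0t.adjoint.toFun u⟫_ℂ - ⟪TtL T0 T0t hW v, (u : H)⟫_ℂ := rfl

lemma bform_add_left (u u' v : ↥T0t.adjoint.domain) :
    bform T0 T0t hW (u + u') v = bform T0 T0t hW u v + bform T0 T0t hW u' v := by
  simp only [bform_eq', _root_.map_add, inner_add_right, Submodule.coe_add, inner_add_left]
  ring

lemma bform_smul_left (c : ℂ) (u v : ↥T0t.adjoint.domain) :
    bform T0 T0t hW (c • u) v = c * bform T0 T0t hW u v := by
  simp only [bform_eq', _root_.map_smul, Submodule.coe_smul, inner_smul_right]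
  ring

lemma bform_add_right (u v v' : ↥T0t.adjoint.domain) :
    bform T0 T0t hW u (v + v') = bform T0 T0t hW u v + bform T0 T0t hW u v' := by
  simp only [bform_eq', _root_.map_add, Submodule.coe_add, inner_add_left]
  ring

lemma bform_smul_right (c : ℂ) (u v : ↥T0t.adjoint.domain) :
    bform T0 T0t hW u (c • v) = (starRingEnd ℂ) c * bform T0 T0t hW u v := by
  simp only [bform_eq', _root_.map_smul, Submodule.coe_smul, inner_smul_left]
  ring

lemma bform_neg_left (u v : ↥T0t.adjoint.domain) :
    bform T0 T0t hW (-u) v = - bform T0 T0t hW u v := by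
  have h := bform_smul_left (hW := hW) (-1 : ℂ) u v
  simpa [neg_one_smul] using h

lemma bform_sub_left (u u' v : ↥T0t.adjoint.domain) :
    bform T0 T0t hW (u - u') v = bform T0 T0t hW u v - bform T0 T0t hW u' v := by
  rw [sub_eq_add_neg, bform_add_left, bform_neg_left, sub_eq_add_neg]

lemma bform_conj (hF : IsFriedrichsPair T0 T0t lam mu)
    (hW : T0t.adjoint.domain = T0.adjoint.domain) (u v : ↥T0t.adjoint.domain) :
    bform T0 T0t hW v u = (starRingEnd ℂ) (bform T0 T0t hW u v) := by
  have hg := Gsym hF hW u v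
  unfold Gop at hg
  rw [inner_add_left, inner_add_right] at hg
  rw [bform_eq', bform_eq', _root_.map_sub, inner_conj_symm, inner_conj_symm]
  have e1 : T0t.adjoint.toFun u = T0t.adjoint u := rfl
  have e2 : T0t.adjoint.toFun v = T0t.adjoint v := rfl
  rw [e1, e2]
  linear_combination -hg

lemma re2 (hW : T0t.adjoint.domain = T0.adjoint.domain) (u : ↥T0t.adjoint.domain) :
    2 * (⟪(u : H), T0t.adjoint u⟫_ℂ).re
      = (⟪(u : H), Gop T0 T0t hW u⟫_ℂ).re + (bform T0 T0t hW u u).re := by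
  have h1 : (⟪TtL T0 T0t hW u, (u : H)⟫_ℂ).re = (⟪(u : H), TtL T0 T0t hW u⟫_ℂ).re := by
    rw [← inner_conj_symm]
    exact (Complex.conj_re _).symm
  rw [bform_eq']
  unfold Gop
  rw [inner_add_right]
  have e1 : T0t.adjoint.toFun u = T0t.adjoint u := rfl
  rw [e1, Complex.add_re, Complex.sub_re, h1]
  ring

lemma re2' (hW : T0t.adjoint.domain = T0.adjoint.domain) (u : ↥T0t.adjoint.domain) :
    2 * (⟪(u : H), TtL T0 T0t hW u⟫_ℂ).re
      = (⟪(u : H), Gop T0 T0t hW u⟫_ℂ).re - (bform T0 T0t hW u u).re := by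
  have h := re2 hW u
  unfold Gop at h ⊢
  rw [inner_add_right, Complex.add_re] at h ⊢
  linarith

lemma normV (hF : IsFriedrichsPair T0 T0t lam mu)
    (hW : T0t.adjoint.domain = T0.adjoint.domain) (u : ↥T0t.adjoint.domain)
    (hu : 0 ≤ (bform T0 T0t hW u u).re) :
    mu * ‖(u : H)‖ ≤ ‖T0t.adjoint u‖ := by
  have hco := Gcoer hF hW u
  have h2 := re2 hW u
  have h3 : (⟪(u : H), T0t.adjoint u⟫_ℂ).re ≤ ‖(u : H)‖ * ‖T0t.adjoint u‖ := by
    calc (⟪(u : H), T0t.adjoint u⟫_ℂ).re ≤ ‖(⟪(u : H), T0t.adjoint u⟫_ℂ)‖ :=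
          Complex.re_le_norm _
      _ ≤ ‖(u : H)‖ * ‖T0t.adjoint u‖ := norm_inner_le_norm _ _
  have hns : mu * ‖(u : H)‖ ^ 2 ≤ ‖(u : H)‖ * ‖T0t.adjoint u‖ := by nlinarith
  rcases eq_or_lt_of_le (norm_nonneg ((u : H))) with h0 | h0
  · rw [← h0]
    simp [norm_nonneg]
  · nlinarith [sq_nonneg ‖(u : H)‖]

lemma normVt (hF : IsFriedrichsPair T0 T0t lam mu)
    (hW : T0t.adjoint.domain = T0.adjoint.domain) (u : ↥T0t.adjoint.domain)
    (hu : (bform T0 T0t hW u u).re ≤ 0) :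
    mu * ‖(u : H)‖ ≤ ‖TtL T0 T0t hW u‖ := by
  have hco := Gcoer hF hW u
  have h2 := re2' hW u
  have h3 : (⟪(u : H), TtL T0 T0t hW u⟫_ℂ).re ≤ ‖(u : H)‖ * ‖TtL T0 T0t hW u‖ := by
    calc (⟪(u : H), TtL T0 T0t hW u⟫_ℂ).re ≤ ‖(⟪(u : H), TtL T0 T0t hW u⟫_ℂ)‖ :=
          Complex.re_le_norm _
      _ ≤ ‖(u : H)‖ * ‖TtL T0 T0t hW u‖ := norm_inner_le_norm _ _
  have hns : mu * ‖(u : H)‖ ^ 2 ≤ ‖(u : H)‖ * ‖TtL T0 T0t hW u‖ := by nlinarith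
  rcases eq_or_lt_of_le (norm_nonneg ((u : H))) with h0 | h0
  · rw [← h0]
    simp [norm_nonneg]
  · nlinarith [sq_nonneg ‖(u : H)‖]

lemma TtL_bound (hF : IsFriedrichsPair T0 T0t lam mu)
    (hW : T0t.adjoint.domain = T0.adjoint.domain) (u : ↥T0t.adjoint.domain) :
    ‖TtL T0 T0t hW u‖ ≤ ‖T0t.adjoint u‖ + 2 * lam * ‖(u : H)‖ := by
  have h : TtL T0 T0t hW u = Gop T0 T0t hW u - T0t.adjoint u := by
    unfold Gop; abel
  rw [h]
  calc ‖Gop T0 T0t hW u - T0t.adjoint u‖ ≤ ‖Gop T0 T0t hW u‖ + ‖T0t.adjoint u‖ :=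
        norm_sub_le _ _
    _ ≤ ‖T0t.adjoint u‖ + 2 * lam * ‖(u : H)‖ := by
        have := Gbound hF hW u
        linarith

lemma bform_D_zero (hF : IsFriedrichsPair T0 T0t lam mu)
    (hW : T0t.adjoint.domain = T0.adjoint.domain) (u : ↥T0t.adjoint.domain)
    (hu : (u : H) ∈ T0.domain) (w : ↥T0t.adjoint.domain) :
    bform T0 T0t hW u w = 0 := by
  obtain ⟨h1, hval⟩ := D_subset_W hF.toIsDualPairT12 (u : H) hu
  have e1 : T0t.adjoint u = T0 ⟨(u : H), hu⟩ := hval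
  have h2 : ⟪TtL T0 T0t hW w, (u : H)⟫_ℂ = ⟪(w : H), T0 ⟨(u : H), hu⟩⟫_ℂ := by
    rw [TtL_apply]
    exact LinearPMap.adjoint_isFormalAdjoint hF.dense' ⟨(w : H), hW.le w.2⟩ ⟨(u : H), hu⟩
  rw [bform_eq']
  have e2 : T0t.adjoint.toFun u = T0t.adjoint u := rfl
  rw [e2, e1, h2, sub_self]

end FriAux

open FriAux in
theorem FriAux_part1
    (T0 T0t : H →ₗ.[ℂ] H) (lam mu : ℝ) (hF : IsFriedrichsPair T0 T0t lam mu)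
    (hW : T0t.adjoint.domain = T0.adjoint.domain)
    (V : Submodule ℂ ↥T0t.adjoint.domain) (hV : VBC T0 T0t hW (V : Set _)) :
    (V ⊓ LinearMap.ker T0t.adjoint.toFun = ⊥ ∧ V ⊔ LinearMap.ker T0t.adjoint.toFun = ⊤) := by
  classical
  have hWplus := hV.1
  have hWminus := hV.2.1
  have hVeq := hV.2.2
  have hmu := hF.mu_pos
  have hlam := hF.lam_pos
  have e0 : ∀ u : ↥T0t.adjoint.domain, T0t.adjoint u = T0t.adjoint.toFun u := fun _ => rfl
  -- injectivity on V
  have hVK : ∀ u : ↥T0t.adjoint.domain, u ∈ V → T0t.adjoint.toFun u = 0 → u = 0 := by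
    intro u huV huK
    have h1 : 0 ≤ (bform T0 T0t hW u u).re := hWplus huV
    have h2 := normV hF hW u h1
    rw [e0, huK, norm_zero] at h2
    have h3 : ‖(u : H)‖ = 0 := by nlinarith [norm_nonneg ((u : H))]
    exact Subtype.ext (norm_eq_zero.mp h3)
  -- D ⊆ V
  have hDV : ∀ (x : H) (hx : x ∈ T0.domain) (hxW : x ∈ T0t.adjoint.domain),
      (⟨x, hxW⟩ : ↥T0t.adjoint.domain) ∈ V := by
    intro x hx hxW
    have hmem : (⟨x, hxW⟩ : ↥T0t.adjoint.domain) ∈ (V : Set _) := by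
      rw [hVeq]
      intro w _
      exact bform_D_zero hF hW ⟨x, hxW⟩ hx w
    exact hmem
  set T1lin : ↥T0t.adjoint.domain →ₗ[ℂ] H := T0t.adjoint.toFun with hT1lin
  -- graph-closedness of V under the relevant limits
  have hVclosed : ∀ (v : ℕ → ↥T0t.adjoint.domain), (∀ n, v n ∈ V) →
      ∀ (x : ↥T0t.adjoint.domain), Tendsto (fun n => ((v n : H))) atTop (𝓝 (x : H)) →
      Tendsto (fun n => T0t.adjoint (v n)) atTop (𝓝 (T0t.adjoint x)) → x ∈ V := by
    intro v hv x hx hTx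
    have hxmem : x ∈ (V : Set _) := by
      rw [hVeq]
      intro w hw
      have hzero : ∀ n, bform T0 T0t hW (v n) w = 0 := fun n => by
        rw [bform_conj hF hW w (v n), hw (v n) (hv n), _root_.map_zero]
      have hten : Tendsto (fun n => bform T0 T0t hW (v n) w) atTop
          (𝓝 (bform T0 T0t hW x w)) := by
        simp only [bform_eq']
        exact (tendsto_const_nhds.inner hTx).sub (tendsto_const_nhds.inner hx)
      exact tendsto_nhds_unique (hten.congr hzero) tendsto_const_nhds
    exact hxmem
  -- the range of T1 on V
  have hRclosed : IsClosed ((Submodule.map T1lin V : Submodule ℂ H) : Set H) := by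
    rw [← isSeqClosed_iff_isClosed]
    intro f g hf hfg
    choose v hvV hvT using fun n => Submodule.mem_map.mp (hf n)
    have hfc : CauchySeq f := hfg.cauchySeq
    have hvc : CauchySeq (fun n => ((v n : H))) := by
      rw [Metric.cauchySeq_iff] at hfc ⊢
      intro ε hε
      obtain ⟨N, hN⟩ := hfc (mu * ε) (by positivity)
      refine ⟨N, fun m hm n hn => ?_⟩
      have hsub : v m - v n ∈ V := sub_mem (hvV m) (hvV n)
      have h1 := normV hF hW (v m - v n) (hWplus hsub)
      have h2 : T0t.adjoint (v m - v n) = f m - f n := by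
        rw [LinearPMap.map_sub]
        rw [e0, e0, hvT m, hvT n]
      rw [h2] at h1
      have h3 : ((v m - v n : ↥T0t.adjoint.domain) : H) = (v m : H) - (v n : H) := rfl
      rw [h3] at h1
      have h4 := hN m hm n hn
      rw [dist_eq_norm] at h4 ⊢
      nlinarith [norm_nonneg ((v m : H) - (v n : H))]
    obtain ⟨x, hx⟩ := cauchySeq_tendsto_of_complete hvc
    have hmem : ∃ hxm : x ∈ T0t.adjoint.domain, T0t.adjoint ⟨x, hxm⟩ = g := by
      apply adj_ext (hd2 hF.toIsDualPairT12)
      intro ψ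
      have h4 : ∀ n, ⟪f n, (ψ : H)⟫_ℂ = ⟪((v n : H)), T0t ψ⟫_ℂ := fun n => by
        rw [← hvT n]
        exact LinearPMap.adjoint_isFormalAdjoint (hd2 hF.toIsDualPairT12) (v n) ψ
      exact tendsto_nhds_unique ((hfg.inner tendsto_const_nhds).congr h4)
        (hx.inner tendsto_const_nhds)
    obtain ⟨hxm, hxval⟩ := hmem
    have hTten : Tendsto (fun n => T0t.adjoint (v n)) atTop
        (𝓝 (T0t.adjoint (⟨x, hxm⟩ : ↥T0t.adjoint.domain))) := by
      rw [hxval]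
      exact hfg.congr (fun n => (by rw [e0, hvT n]))
    have hxV : (⟨x, hxm⟩ : ↥T0t.adjoint.domain) ∈ V := hVclosed v hvV ⟨x, hxm⟩ hx hTten
    exact Submodule.mem_map.mpr ⟨⟨x, hxm⟩, hxV, hxval⟩
  have hRorth : (Submodule.map T1lin V)ᗮ = ⊥ := by
    rw [Submodule.eq_bot_iff]
    intro h hh
    rw [Submodule.mem_orthogonal] at hh
    have hD : ∀ ψ : T0.domain, ⟪(0 : H), (ψ : H)⟫_ℂ = ⟪h, T0 ψ⟫_ℂ := by
      intro ψ
      obtain ⟨h1, hval⟩ := D_subset_W hF.toIsDualPairT12 (ψ : H) ψ.2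
      have hmemV := hDV (ψ : H) ψ.2 h1
      have hz : ⟪T0t.adjoint ⟨(ψ : H), h1⟩, h⟫_ℂ = 0 :=
        hh _ (Submodule.mem_map.mpr ⟨⟨(ψ : H), h1⟩, hmemV, rfl⟩)
      rw [hval] at hz
      rw [inner_zero_left, ← inner_conj_symm, hz, _root_.map_zero]
    obtain ⟨hhm, hhval⟩ := adj_ext hF.dense' hD
    have hhW : h ∈ T0t.adjoint.domain := hW.ge hhm
    set h' : ↥T0t.adjoint.domain := ⟨h, hhW⟩ with hh'
    have hTt0 : TtL T0 T0t hW h' = 0 := by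
      rw [TtL_apply]
      exact hhval
    have hio : h' ∈ iorth T0 T0t hW (V : Set _) := by
      intro v hv
      have hb : bform T0 T0t hW v h' = 0 := by
        rw [bform_eq']
        have h5 : ⟪(h' : H), T0t.adjoint.toFun v⟫_ℂ = 0 := by
          rw [← inner_conj_symm]
          have := hh (T0t.adjoint.toFun v) (Submodule.mem_map.mpr ⟨v, hv, rfl⟩)
          rw [this, _root_.map_zero]
        rw [h5, hTt0, inner_zero_left, sub_zero]
      rw [bform_conj hF hW v h', hb, _root_.map_zero]
    have hminus : (bform T0 T0t hW h' h').re ≤ 0 := hWminus hio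
    have h6 := normVt hF hW h' hminus
    rw [hTt0, norm_zero] at h6
    have h7 : ‖(h' : H)‖ = 0 := by nlinarith [norm_nonneg ((h' : H))]
    exact norm_eq_zero.mp h7
  have hRtop : Submodule.map T1lin V = ⊤ := by
    haveI : CompleteSpace (Submodule.map T1lin V) := hRclosed.completeSpace_coe
    exact Submodule.orthogonal_eq_bot_iff.mp hRorth
  constructor
  · rw [eq_bot_iff]
    intro u hu
    obtain ⟨h1, h2⟩ := Submodule.mem_inf.mp hu
    rw [Submodule.mem_bot]
    exact hVK u h1 (LinearMap.mem_ker.mp h2)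
  · rw [eq_top_iff]
    intro u _
    have hmem : T1lin u ∈ Submodule.map T1lin V := hRtop ▸ Submodule.mem_top
    obtain ⟨v, hv, hval⟩ := Submodule.mem_map.mp hmem
    have hker : u - v ∈ LinearMap.ker T0t.adjoint.toFun := by
      rw [LinearMap.mem_ker, _root_.map_sub, hval, sub_self]
    exact Submodule.mem_sup.mpr ⟨v, hv, u - v, hker, by abel⟩

namespace FriAux
variable {T0 T0t : H →ₗ.[ℂ] H} {lam mu : ℝ}

lemma bform_bound (hF : IsFriedrichsPair T0 T0t lam mu)
    (hW : T0t.adjoint.domain = T0.adjoint.domain) (u v : ↥T0t.adjoint.domain) :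
    ‖bform T0 T0t hW u v‖ ≤ (2 + 2 * lam) * (gnorm T0t u * gnorm T0t v) := by
  have hlam := hF.lam_pos
  have h1 : ‖bform T0 T0t hW u v‖
      ≤ ‖(v : H)‖ * ‖T0t.adjoint u‖ + ‖TtL T0 T0t hW v‖ * ‖(u : H)‖ := by
    rw [bform_eq']
    calc ‖⟪(v : H), T0t.adjoint.toFun u⟫_ℂ - ⟪TtL T0 T0t hW v, (u : H)⟫_ℂ‖
        ≤ ‖⟪(v : H), T0t.adjoint.toFun u⟫_ℂ‖ + ‖⟪TtL T0 T0t hW v, (u : H)⟫_ℂ‖ :=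
          norm_sub_le _ _
      _ ≤ ‖(v : H)‖ * ‖T0t.adjoint u‖ + ‖TtL T0 T0t hW v‖ * ‖(u : H)‖ :=
          add_le_add (norm_inner_le_norm _ _) (norm_inner_le_norm _ _)
  have h2 := TtL_bound hF hW v
  unfold gnorm
  have n1 := norm_nonneg ((u : H)); have n2 := norm_nonneg (T0t.adjoint u)
  have n3 := norm_nonneg ((v : H)); have n4 := norm_nonneg (T0t.adjoint v)
  have n5 := norm_nonneg (TtL T0 T0t hW v)
  nlinarith [mul_nonneg n1 n3, mul_nonneg n1 n4, mul_nonneg n2 n3, mul_nonneg n2 n4,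
    mul_nonneg n1 n2, mul_nonneg (mul_nonneg n1 n3) hlam.le,
    mul_nonneg (mul_nonneg n2 n4) hlam.le, mul_nonneg (mul_nonneg n2 n3) hlam.le]

end FriAux

open FriAux in
theorem FriAux_part2
    (T0 T0t : H →ₗ.[ℂ] H) (lam mu : ℝ) (hF : IsFriedrichsPair T0 T0t lam mu)
    (hW : T0t.adjoint.domain = T0.adjoint.domain)
    (V : Submodule ℂ ↥T0t.adjoint.domain) (hV : VBC T0 T0t hW (V : Set _)) :
    (∀ p2 : ↥T0t.adjoint.domain →ₗ[ℂ] ↥T0t.adjoint.domain,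
      (∀ u, p2 u ∈ LinearMap.ker T0t.adjoint.toFun ∧ u - p2 u ∈ V) →
      (∃ C, ∀ u v, ‖bform T0 T0t hW (u - (2 : ℂ) • p2 u) v‖ ≤
          C * (gnorm T0t u * gnorm T0t v)) ∧
      MBC T0 T0t hW (fun u v => bform T0 T0t hW (u - (2 : ℂ) • p2 u) v) ∧
      kerDsubM T0 T0t hW (fun u v => bform T0 T0t hW (u - (2 : ℂ) • p2 u) v) = (V : Set _)) := by
  classical
  have hWplus := hV.1
  have hWminus := hV.2.1
  have hVeq := hV.2.2
  have hmu := hF.mu_pos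
  have hlam := hF.lam_pos
  have e0 : ∀ u : ↥T0t.adjoint.domain, T0t.adjoint u = T0t.adjoint.toFun u := fun _ => rfl
  have hVK : ∀ u : ↥T0t.adjoint.domain, u ∈ V → T0t.adjoint.toFun u = 0 → u = 0 := by
    intro u huV huK
    have h1 : 0 ≤ (bform T0 T0t hW u u).re := hWplus huV
    have h2 := normV hF hW u h1
    rw [e0, huK, norm_zero] at h2
    have h3 : ‖(u : H)‖ = 0 := by nlinarith [norm_nonneg ((u : H))]
    exact Subtype.ext (norm_eq_zero.mp h3)
  intro p2 hp2
  have hT1p2 : ∀ u, T0t.adjoint.toFun (p2 u) = 0 := fun u => LinearMap.mem_ker.mp (hp2 u).1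
  have hp2V : ∀ u : ↥T0t.adjoint.domain, u ∈ V → p2 u = 0 := by
    intro u hu
    have h1 : p2 u ∈ V := by
      have h2 : p2 u = u - (u - p2 u) := by abel
      rw [h2]
      exact sub_mem hu (hp2 u).2
    exact hVK _ h1 (hT1p2 u)
  have hp2K : ∀ u, T0t.adjoint.toFun u = 0 → p2 u = u := by
    intro u hu
    have h1 : u - p2 u ∈ V := (hp2 u).2
    have h2 : T0t.adjoint.toFun (u - p2 u) = 0 := by
      rw [_root_.map_sub, hu, hT1p2 u, sub_zero]
    have h3 := hVK _ h1 h2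
    have h4 : u - p2 u = 0 := h3
    have h5 : p2 u = u - (u - p2 u) := by abel
    rw [h5, h4, sub_zero]
  -- the kernel projection bound
  have hT1two : ∀ u, T0t.adjoint (u - (2 : ℂ) • p2 u) = T0t.adjoint u := by
    intro u
    rw [LinearPMap.map_sub, LinearPMap.map_smul, e0 (p2 u), hT1p2 u, smul_zero, sub_zero]
  have hgp : ∀ u, gnorm T0t (u - (2 : ℂ) • p2 u) ≤ (3 + 2 / mu) * gnorm T0t u := by
    intro u
    have hk : ‖((p2 u : H))‖ ≤ ‖(u : H)‖ + (1 / mu) * ‖T0t.adjoint u‖ := by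
      have h1 := normV hF hW (u - p2 u) (hWplus ((hp2 u).2))
      have h2 : T0t.adjoint (u - p2 u) = T0t.adjoint u := by
        rw [LinearPMap.map_sub, e0 (p2 u), hT1p2 u, sub_zero]
      rw [h2] at h1
      have h3 : ((u - p2 u : ↥T0t.adjoint.domain) : H) = (u : H) - (p2 u : H) := rfl
      rw [h3] at h1
      have h4 : ‖((p2 u : H))‖ ≤ ‖(u : H)‖ + ‖(u : H) - (p2 u : H)‖ := by
        have h5 := norm_sub_le ((u : H)) ((u : H) - (p2 u : H))
        simpa using h5
      have h6 : ‖(u : H) - (p2 u : H)‖ ≤ (1 / mu) * ‖T0t.adjoint u‖ := by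
        rw [div_mul_eq_mul_div, le_div_iff₀ hmu]
        nlinarith
      linarith
    have hn : ‖((u - (2 : ℂ) • p2 u : ↥T0t.adjoint.domain) : H)‖
        ≤ ‖(u : H)‖ + 2 * ‖((p2 u : H))‖ := by
      have h5 : ((u - (2 : ℂ) • p2 u : ↥T0t.adjoint.domain) : H)
          = (u : H) - (2 : ℂ) • ((p2 u : H)) := rfl
      rw [h5]
      calc ‖(u : H) - (2 : ℂ) • ((p2 u : H))‖
          ≤ ‖(u : H)‖ + ‖(2 : ℂ) • ((p2 u : H))‖ := norm_sub_le _ _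
        _ = ‖(u : H)‖ + 2 * ‖((p2 u : H))‖ := by
            rw [norm_smul]
            norm_num
    unfold gnorm
    rw [hT1two u]
    have h7 : (2 : ℝ) / mu = 2 * (1 / mu) := by ring
    have h8 : 0 ≤ 1 / mu := by positivity
    have n2 := norm_nonneg (T0t.adjoint u)
    have n1 := norm_nonneg ((u : H))
    nlinarith [mul_nonneg h8 n2, mul_nonneg h8 n1]
  refine ⟨⟨(2 + 2 * lam) * (3 + 2 / mu), ?_⟩, ⟨?_, ?_⟩, ?_⟩
  · intro u v
    calc ‖bform T0 T0t hW (u - (2 : ℂ) • p2 u) v‖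
        ≤ (2 + 2 * lam) * (gnorm T0t (u - (2 : ℂ) • p2 u) * gnorm T0t v) :=
          bform_bound hF hW _ v
      _ ≤ (2 + 2 * lam) * (3 + 2 / mu) * (gnorm T0t u * gnorm T0t v) := by
          have hg := hgp u
          have hgv : 0 ≤ gnorm T0t v := add_nonneg (norm_nonneg _) (norm_nonneg _)
          have hgu : 0 ≤ gnorm T0t u := add_nonneg (norm_nonneg _) (norm_nonneg _)
          have hgw : 0 ≤ gnorm T0t (u - (2 : ℂ) • p2 u) :=
            add_nonneg (norm_nonneg _) (norm_nonneg _)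
          have h9 : gnorm T0t (u - (2 : ℂ) • p2 u) * gnorm T0t v
              ≤ ((3 + 2 / mu) * gnorm T0t u) * gnorm T0t v :=
            mul_le_mul_of_nonneg_right hg hgv
          have h10 : (0:ℝ) ≤ 2 + 2 * lam := by linarith
          calc (2 + 2 * lam) * (gnorm T0t (u - (2 : ℂ) • p2 u) * gnorm T0t v)
              ≤ (2 + 2 * lam) * (((3 + 2 / mu) * gnorm T0t u) * gnorm T0t v) :=
                mul_le_mul_of_nonneg_left h9 h10
            _ = (2 + 2 * lam) * (3 + 2 / mu) * (gnorm T0t u * gnorm T0t v) := by ring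
  · -- (M1)
    intro u
    show 0 ≤ (bform T0 T0t hW (u - (2 : ℂ) • p2 u) u).re
    set k := p2 u with hk
    set a := u - p2 u with ha
    have hu1 : u = a + k := by rw [ha, hk]; abel
    have hsplit : u - (2 : ℂ) • p2 u = a - k := by
      rw [two_smul, ha, hk]; abel
    rw [hsplit]
    nth_rewrite 1 [hu1]
    rw [bform_sub_left, bform_add_right, bform_add_right]
    have h1 : 0 ≤ (bform T0 T0t hW a a).re := hWplus ((hp2 u).2)
    have h2 : (bform T0 T0t hW k a).re = (bform T0 T0t hW a k).re := by
      rw [bform_conj hF hW a k]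
      exact Complex.conj_re _
    have hk0 : T0t.adjoint.toFun k = 0 := hT1p2 u
    have h3 : (bform T0 T0t hW k k).re ≤ 0 := by
      have h4 : bform T0 T0t hW k k = - ⟪TtL T0 T0t hW k, (k : H)⟫_ℂ := by
        rw [bform_eq', hk0, inner_zero_right, zero_sub]
      have hg := Gcoer hF hW k
      have h5 : Gop T0 T0t hW k = TtL T0 T0t hW k := by
        unfold Gop
        rw [e0, hk0, zero_add]
      rw [h5] at hg
      have h6 : (⟪TtL T0 T0t hW k, (k : H)⟫_ℂ).re = (⟪(k : H), TtL T0 T0t hW k⟫_ℂ).re := by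
        rw [← inner_conj_symm]
        exact (Complex.conj_re _).symm
      rw [h4, Complex.neg_re, h6]
      nlinarith [norm_nonneg ((k : H)), sq_nonneg ‖(k : H)‖]
    simp only [Complex.sub_re, Complex.add_re]
    linarith
  · -- (M2)
    intro w
    refine ⟨w - p2 w, p2 w, ?_, ?_, by abel⟩
    · intro v
      show bform T0 T0t hW (w - p2 w) v
        = bform T0 T0t hW ((w - p2 w) - (2 : ℂ) • p2 (w - p2 w)) v
      rw [hp2V _ ((hp2 w).2), smul_zero, sub_zero]
    · intro v
      show bform T0 T0t hW (p2 w) v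
        + bform T0 T0t hW ((p2 w) - (2 : ℂ) • p2 (p2 w)) v = 0
      rw [hp2K _ (hT1p2 w)]
      have h1 : p2 w - (2 : ℂ) • p2 w = -(p2 w) := by rw [two_smul]; abel
      rw [h1, bform_neg_left, add_neg_cancel]
  · -- kernel identification
    ext u
    simp only [kerDsubM, Set.mem_setOf_eq, SetLike.mem_coe]
    constructor
    · intro hu
      have hz : ∀ v, bform T0 T0t hW (p2 u) v = 0 := by
        intro v
        have h1 := hu v
        rw [bform_sub_left, bform_smul_left] at h1
        have h2 : (2 : ℂ) * bform T0 T0t hW (p2 u) v = 0 := by linear_combination h1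
        exact (mul_eq_zero.mp h2).resolve_left two_ne_zero
      have h1 : p2 u ∈ (V : Set _) := by
        rw [hVeq]
        intro w _
        exact hz w
      have h2 : p2 u = 0 := hVK _ h1 (hT1p2 u)
      have h3 := (hp2 u).2
      rwa [h2, sub_zero] at h3
    · intro hu v
      rw [hp2V u hu, smul_zero, sub_zero]


/-- Theorem 5.2: if `V` satisfies the (V)-boundary conditions then `W = V ∔ ker T₁`,
and for the projection `p₂` onto `ker T₁` along `V`, the operator `M = D(1 − 2p₂)`
belongs to `L(W;W')`, satisfies the (M)-boundary conditions and `ker (D − M) = V`. -/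
theorem VBC_direct_sum_kerT1_and_M_of_projection
    (T0 T0t : H →ₗ.[ℂ] H) (lam mu : ℝ) (hF : IsFriedrichsPair T0 T0t lam mu)
    (hW : T0t.adjoint.domain = T0.adjoint.domain)
    (V : Submodule ℂ ↥T0t.adjoint.domain) (hV : VBC T0 T0t hW (V : Set _)) :
    (V ⊓ LinearMap.ker T0t.adjoint.toFun = ⊥ ∧ V ⊔ LinearMap.ker T0t.adjoint.toFun = ⊤) ∧
    (∀ p2 : ↥T0t.adjoint.domain →ₗ[ℂ] ↥T0t.adjoint.domain,
      (∀ u, p2 u ∈ LinearMap.ker T0t.adjoint.toFun ∧ u - p2 u ∈ V) →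
      (∃ C, ∀ u v, ‖bform T0 T0t hW (u - (2 : ℂ) • p2 u) v‖ ≤
          C * (gnorm T0t u * gnorm T0t v)) ∧
      MBC T0 T0t hW (fun u v => bform T0 T0t hW (u - (2 : ℂ) • p2 u) v) ∧
      kerDsubM T0 T0t hW (fun u v => bform T0 T0t hW (u - (2 : ℂ) • p2 u) v) = (V : Set _)) :=
  ⟨FriAux_part1 T0 T0t lam mu hF hW V hV, FriAux_part2 T0 T0t lam mu hF hW V hV⟩
end
end

section
/- Let (T0, T̃0) be a joint pair of abstract Friedrichs operators on a complex Hilbert space H and let M ∈ L(W;W') satisfy (M)-boundary conditions. Set V := ker(D − M). Then W2 := ker(D + M) ∩ W0^⊥ (Hilbert orthogonal complement in the graph space) is a closed subspace of W contained in W⁻, and W = V ∔ W2 (direct sum). -/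
open scoped InnerProductSpace
open Filter Topology LinearPMap

noncomputable section

variable {H : Type*} [NormedAddCommGroup H] [InnerProductSpace ℂ H] [CompleteSpace H]

section AuxFriedrichs

set_option linter.unusedSectionVars false

variable {T0 T0t : H →ₗ.[ℂ] H} {lam : ℝ}

lemma fa1 (hD : IsDualPairT12 T0 T0t lam) : T0t.IsFormalAdjoint T0 :=
  fun x y => (hD.sym y x).symm

lemma fa2 (hD : IsDualPairT12 T0 T0t lam) : T0.IsFormalAdjoint T0t := (fa1 hD).symm

def Bdom (T0 T0t : H →ₗ.[ℂ] H) (hle : T0.domain ≤ T0t.domain) : ↥T0.domain →ₗ[ℂ] H :=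
  T0.toFun + T0t.toFun ∘ₗ Submodule.inclusion hle

lemma Bdom_apply (hle : T0.domain ≤ T0t.domain) (x : T0.domain) :
    Bdom T0 T0t hle x = T0 x + T0t ⟨(x : H), hle x.2⟩ := rfl

def Sop (T0 T0t : H →ₗ.[ℂ] H) (hD : IsDualPairT12 T0 T0t lam) : H →L[ℂ] H :=
  (LinearMap.mkContinuous (Bdom T0 T0t hD.dom_eq.le) (2 * lam)
      (fun x => by simpa [Bdom_apply] using hD.bound x x.2)).extend
    (Submodule.subtypeL T0.domain)

lemma Sop_apply_dom (hD : IsDualPairT12 T0 T0t lam) (φ : T0.domain) :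
    Sop T0 T0t hD (φ : H) = T0 φ + T0t ⟨(φ : H), hD.dom_eq.le φ.2⟩ :=
  ContinuousLinearMap.extend_eq (f := _) (e := Submodule.subtypeL T0.domain)
    (h_dense := hD.dense'.denseRange_val)
    (h_e := isUniformEmbedding_subtype_val.isUniformInducing) (x := φ)

lemma Sop_symm_dom (hD : IsDualPairT12 T0 T0t lam) (φ ψ : T0.domain) :
    ⟪Sop T0 T0t hD (φ : H), (ψ : H)⟫_ℂ = ⟪(φ : H), Sop T0 T0t hD (ψ : H)⟫_ℂ := by
  rw [Sop_apply_dom hD φ, Sop_apply_dom hD ψ, inner_add_left, inner_add_right]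
  have h1 : ⟪T0 φ, (ψ : H)⟫_ℂ = ⟪(φ : H), T0t ⟨(ψ : H), hD.dom_eq.le ψ.2⟩⟫_ℂ :=
    fa2 hD φ ⟨(ψ : H), hD.dom_eq.le ψ.2⟩
  have h2 : ⟪T0t ⟨(φ : H), hD.dom_eq.le φ.2⟩, (ψ : H)⟫_ℂ = ⟪(φ : H), T0 ψ⟫_ℂ :=
    fa1 hD ⟨(φ : H), hD.dom_eq.le φ.2⟩ ψ
  rw [h1, h2]; ring

lemma Sop_symm (hD : IsDualPairT12 T0 T0t lam) (x y : H) :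
    ⟪Sop T0 T0t hD x, y⟫_ℂ = ⟪x, Sop T0 T0t hD y⟫_ℂ := by
  have step1 : ∀ (ψ : T0.domain) (x : H),
      ⟪Sop T0 T0t hD x, (ψ : H)⟫_ℂ = ⟪x, Sop T0 T0t hD (ψ : H)⟫_ℂ := by
    intro ψ
    have hfg : (fun x : H => ⟪Sop T0 T0t hD x, (ψ : H)⟫_ℂ)
        = fun x : H => ⟪x, Sop T0 T0t hD (ψ : H)⟫_ℂ := by
      apply Continuous.ext_on hD.dense'
      · exact (Sop T0 T0t hD).continuous.inner continuous_const
      · exact continuous_id.inner continuous_const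
      · intro x hx
        exact Sop_symm_dom hD ⟨x, hx⟩ ψ
    exact fun x => congrFun hfg x
  have hfg : (fun y : H => ⟪Sop T0 T0t hD x, y⟫_ℂ)
      = fun y : H => ⟪x, Sop T0 T0t hD y⟫_ℂ := by
    apply Continuous.ext_on hD.dense'
    · exact continuous_const.inner continuous_id
    · exact continuous_const.inner (Sop T0 T0t hD).continuous
    · intro y hy
      exact step1 ⟨y, hy⟩ x
  exact congrFun hfg y

lemma denseT0t' (hD : IsDualPairT12 T0 T0t lam) : Dense (T0t.domain : Set H) :=
  hD.dom_eq ▸ hD.dense'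

lemma hT0le (hD : IsDualPairT12 T0 T0t lam) : T0 ≤ T0t.adjoint :=
  (fa1 hD).le_adjoint (denseT0t' hD)

lemma hT0tle (hD : IsDualPairT12 T0 T0t lam) : T0t ≤ T0.adjoint :=
  (fa2 hD).le_adjoint hD.dense'

lemma closed_closure_eq {f : H →ₗ.[ℂ] H} (hf : f.IsClosed) : f.closure = f :=
  LinearPMap.eq_of_eq_graph (by
    rw [← hf.isClosable.graph_closure_eq_closure_graph]
    exact hf.submodule_topologicalClosure_eq)

lemma S_eq_on_W (hD : IsDualPairT12 T0 T0t lam)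
    (hW : T0t.adjoint.domain = T0.adjoint.domain) (u : T0t.adjoint.domain) :
    T0t.adjoint u + T0.adjoint ⟨(u : H), hW.le u.2⟩ = Sop T0 T0t hD (u : H) := by
  apply hD.dense'.eq_of_inner_left (𝕜 := ℂ)
  intro φ0 hφ0
  obtain ⟨φ, rfl⟩ : ∃ φ : T0.domain, (φ : H) = φ0 := ⟨⟨φ0, hφ0⟩, rfl⟩
  rw [inner_add_left]
  have h1 : ⟪T0t.adjoint u, (φ : H)⟫_ℂ = ⟪(u : H), T0t ⟨(φ : H), hD.dom_eq.le φ.2⟩⟫_ℂ :=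
    LinearPMap.adjoint_isFormalAdjoint (denseT0t' hD) u ⟨(φ : H), hD.dom_eq.le φ.2⟩
  have h2 : ⟪T0.adjoint ⟨(u : H), hW.le u.2⟩, (φ : H)⟫_ℂ = ⟪(u : H), T0 φ⟫_ℂ :=
    LinearPMap.adjoint_isFormalAdjoint hD.dense' ⟨(u : H), hW.le u.2⟩ φ
  have h3 : ⟪Sop T0 T0t hD (u : H), (φ : H)⟫_ℂ
      = ⟪(u : H), Sop T0 T0t hD (φ : H)⟫_ℂ := Sop_symm hD _ _
  rw [h1, h2, h3, Sop_apply_dom hD φ, inner_add_right]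
  ring

lemma bform_conj (hD : IsDualPairT12 T0 T0t lam)
    (hW : T0t.adjoint.domain = T0.adjoint.domain) (u v : T0t.adjoint.domain) :
    bform T0 T0t hW v u = starRingEnd ℂ (bform T0 T0t hW u v) := by
  have hu := S_eq_on_W hD hW u
  have hv := S_eq_on_W hD hW v
  have key : ⟪T0t.adjoint u + T0.adjoint ⟨(u : H), hW.le u.2⟩, (v : H)⟫_ℂ
      = ⟪(u : H), T0t.adjoint v + T0.adjoint ⟨(v : H), hW.le v.2⟩⟫_ℂ := by
    rw [hu, hv]; exact Sop_symm hD _ _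
  simp only [bform, pInner, _root_.map_sub, inner_conj_symm]
  rw [inner_add_left, inner_add_right] at key
  linear_combination -key

lemma adjoint_isClosed' {T : H →ₗ.[ℂ] H} (hT : Dense (T.domain : Set H)) : T.adjoint.IsClosed := by
  have hset : (T.adjoint.graph : Set (H × H)) =
      ⋂ x : T.domain, {p : H × H | ⟪p.2, (x : H)⟫_ℂ = ⟪p.1, T x⟫_ℂ} := by
    ext p
    simp only [Set.mem_iInter, Set.mem_setOf_eq, SetLike.mem_coe, LinearPMap.mem_graph_iff]
    constructor
    · rintro ⟨y, hy1, hy2⟩ x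
      rw [← hy1, ← hy2]
      exact LinearPMap.adjoint_isFormalAdjoint hT y x
    · intro hp
      have hv : p.1 ∈ T.adjoint.domain :=
        LinearPMap.mem_adjoint_domain_of_exists _ ⟨p.2, fun x => hp x⟩
      exact ⟨⟨p.1, hv⟩, rfl, LinearPMap.adjoint_apply_eq hT _ fun x => hp x⟩
  show _root_.IsClosed (T.adjoint.graph : Set (H × H))
  rw [hset]
  exact isClosed_iInter fun x =>
    isClosed_eq (continuous_snd.inner continuous_const) (continuous_fst.inner continuous_const)

lemma closableT0 (hD : IsDualPairT12 T0 T0t lam) : T0.IsClosable :=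
  (adjoint_isClosed' (denseT0t' hD)).isClosable.leIsClosable (hT0le hD)

lemma closure_le_T1 (hD : IsDualPairT12 T0 T0t lam) : T0.closure ≤ T0t.adjoint := by
  have h := (adjoint_isClosed' (denseT0t' hD)).isClosable.closure_mono (hT0le hD)
  rwa [closed_closure_eq (adjoint_isClosed' (denseT0t' hD))] at h

lemma memW_of_mem_closure (hD : IsDualPairT12 T0 T0t lam) {x : H}
    (hx : x ∈ T0.closure.domain) : x ∈ T0t.adjoint.domain := (closure_le_T1 hD).1 hx

lemma T1_eq_closure' (hD : IsDualPairT12 T0 T0t lam) {x : H} (hx : x ∈ T0.closure.domain) :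
    T0t.adjoint ⟨x, memW_of_mem_closure hD hx⟩ = T0.closure ⟨x, hx⟩ :=
  ((closure_le_T1 hD).2 rfl).symm

section Graph

def Kgr (T0 : H →ₗ.[ℂ] H) : Submodule ℂ (WithLp 2 (H × H)) :=
  T0.graph.comap (WithLp.linearEquiv 2 ℂ (H × H) : WithLp 2 (H × H) →ₗ[ℂ] H × H)

lemma contE : Continuous fun z : WithLp 2 (H × H) =>
    (WithLp.linearEquiv 2 ℂ (H × H) : WithLp 2 (H × H) →ₗ[ℂ] H × H) z :=
  WithLp.prod_continuous_ofLp 2 H H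

lemma contEsymm : Continuous fun p : H × H => (WithLp.equiv 2 (H × H)).symm p :=
  WithLp.prod_continuous_toLp 2 H H

lemma mem_Kgr_iff (T0 : H →ₗ.[ℂ] H) (z : WithLp 2 (H × H)) :
    z ∈ Kgr T0 ↔ (WithLp.equiv 2 (H × H)) z ∈ T0.graph := Iff.rfl

lemma mem_Kgr_tc_of (T0 : H →ₗ.[ℂ] H) (p : H × H) (hp : p ∈ T0.graph.topologicalClosure) :
    (WithLp.equiv 2 (H × H)).symm p ∈ (Kgr T0).topologicalClosure := by
  have h1 : p ∈ closure (T0.graph : Set (H × H)) := hp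
  have h2 := map_mem_closure contEsymm h1
    (fun x hx => by exact (mem_Kgr_iff T0 _).mpr hx)
  exact h2

lemma mem_tc_of_Kgr (T0 : H →ₗ.[ℂ] H) (z : WithLp 2 (H × H))
    (hz : z ∈ (Kgr T0).topologicalClosure) :
    (WithLp.equiv 2 (H × H)) z ∈ T0.graph.topologicalClosure := by
  have h1 : z ∈ closure (Kgr T0 : Set (WithLp 2 (H × H))) := hz
  have h2 := map_mem_closure (f := fun z : WithLp 2 (H × H) => (WithLp.equiv 2 (H × H)) z)
    (t := (T0.graph : Set (H × H)))
    (WithLp.prod_continuous_ofLp 2 H H) h1 (fun x hx => by exact hx)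
  exact h2

end Graph

lemma bform_zero_left (hD : IsDualPairT12 T0 T0t lam)
    (hW : T0t.adjoint.domain = T0.adjoint.domain) (u v : T0t.adjoint.domain)
    (hu : (u : H) ∈ T0.closure.domain) : bform T0 T0t hW u v = 0 := by
  -- the element ((u : H), T1 u) lies in the closure of the graph of T0
  have hgr : ((u : H), T0t.adjoint u) ∈ T0.graph.topologicalClosure := by
    rw [(closableT0 hD).graph_closure_eq_closure_graph]
    have h1 := T0.closure.mem_graph ⟨(u : H), hu⟩
    have h2 : T0t.adjoint u = T0.closure ⟨(u : H), hu⟩ := by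
      rw [← T1_eq_closure' hD hu]
    rwa [← h2] at h1
  have hz : (WithLp.equiv 2 (H × H)).symm ((u : H), T0t.adjoint u)
      ∈ ((Kgr T0)ᗮ)ᗮ := by
    rw [Submodule.orthogonal_orthogonal_eq_closure]
    exact mem_Kgr_tc_of T0 _ hgr
  -- the vector (−T̃₁v, v) is orthogonal to the graph of T0
  set a : H := T0.adjoint ⟨(v : H), hW.le v.2⟩ with ha
  have hzv : (WithLp.equiv 2 (H × H)).symm (-a, (v : H)) ∈ (Kgr T0)ᗮ := by
    rw [Submodule.mem_orthogonal]
    rintro w hw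
    rcases T0.mem_graph_iff.mp ((mem_Kgr_iff T0 w).mp hw) with ⟨x, hx1, hx2⟩
    have key : ⟪a, (x : H)⟫_ℂ = ⟪(v : H), T0 x⟫_ℂ :=
      LinearPMap.adjoint_isFormalAdjoint hD.dense' ⟨(v : H), hW.le v.2⟩ x
    have key' : ⟪(x : H), a⟫_ℂ = ⟪T0 x, (v : H)⟫_ℂ := by
      rw [← inner_conj_symm, key, inner_conj_symm]
    show ⟪((WithLp.equiv 2 (H × H)) w).1, -a⟫_ℂ + ⟪((WithLp.equiv 2 (H × H)) w).2, (v : H)⟫_ℂ = 0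
    rw [← hx1, ← hx2, inner_neg_right, key']
    ring
  have h0 := (Submodule.mem_orthogonal _ _).mp hz _ hzv
  have h0' : ⟪-a, (u : H)⟫_ℂ + ⟪(v : H), T0t.adjoint u⟫_ℂ = 0 := h0
  rw [inner_neg_left] at h0'
  show ⟪(v : H), T0t.adjoint u⟫_ℂ - ⟪a, (u : H)⟫_ℂ = 0
  linear_combination h0'

lemma mem_W0_of_bform_zero (hD : IsDualPairT12 T0 T0t lam)
    (hW : T0t.adjoint.domain = T0.adjoint.domain) (u : T0t.adjoint.domain)
    (h : ∀ v, bform T0 T0t hW u v = 0) : (u : H) ∈ T0.closure.domain := by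
  have hz : (WithLp.equiv 2 (H × H)).symm ((u : H), T0t.adjoint u) ∈ ((Kgr T0)ᗮ)ᗮ := by
    rw [Submodule.mem_orthogonal]
    intro w hw
    have hw' := (Submodule.mem_orthogonal _ _).mp hw
    set w1 : H := ((WithLp.equiv 2 (H × H)) w).1 with hw1
    set w2 : H := ((WithLp.equiv 2 (H × H)) w).2 with hw2d
    have hkey : ∀ x : T0.domain, ⟪-w1, (x : H)⟫_ℂ = ⟪w2, T0 x⟫_ℂ := by
      intro x
      have hg : (WithLp.equiv 2 (H × H)).symm ((x : H), T0 x) ∈ Kgr T0 :=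
        (mem_Kgr_iff T0 _).mpr (T0.mem_graph x)
      have h0 := hw' _ hg
      have h0' : ⟪(x : H), w1⟫_ℂ + ⟪T0 x, w2⟫_ℂ = 0 := h0
      rw [inner_neg_left]
      have := congrArg (starRingEnd ℂ) h0'
      simp only [_root_.map_add, inner_conj_symm, _root_.map_zero] at this
      linear_combination -this
    have hw2dom : w2 ∈ T0.adjoint.domain :=
      LinearPMap.mem_adjoint_domain_of_exists _ ⟨-w1, hkey⟩
    have hadj : T0.adjoint ⟨w2, hw2dom⟩ = -w1 :=
      LinearPMap.adjoint_apply_eq hD.dense' _ fun x => hkey x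
    set v : T0t.adjoint.domain := ⟨w2, hW.ge hw2dom⟩ with hv
    have hbv := h v
    have hbv' : ⟪w2, T0t.adjoint u⟫_ℂ - ⟪T0.adjoint ⟨(v : H), hW.le v.2⟩, (u : H)⟫_ℂ = 0 := hbv
    have hval : T0.adjoint ⟨(v : H), hW.le v.2⟩ = -w1 := hadj
    rw [hval, inner_neg_left] at hbv'
    show ⟪w1, (u : H)⟫_ℂ + ⟪w2, T0t.adjoint u⟫_ℂ = 0
    linear_combination hbv'
  rw [Submodule.orthogonal_orthogonal_eq_closure] at hz
  have h2 := mem_tc_of_Kgr T0 _ hz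
  have h3 : ((u : H), T0t.adjoint u) ∈ T0.graph.topologicalClosure := h2
  rw [(closableT0 hD).graph_closure_eq_closure_graph] at h3
  exact LinearPMap.mem_domain_of_mem_graph h3

def K0gr (T0 : H →ₗ.[ℂ] H) : Submodule ℂ (WithLp 2 (H × H)) :=
  T0.closure.graph.comap (WithLp.linearEquiv 2 ℂ (H × H) : WithLp 2 (H × H) →ₗ[ℂ] H × H)

lemma K0gr_closed (hD : IsDualPairT12 T0 T0t lam) :
    IsClosed ((K0gr T0) : Set (WithLp 2 (H × H))) := by
  have h : _root_.IsClosed (T0.closure.graph : Set (H × H)) := (closableT0 hD).closure_isClosed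
  exact h.preimage contE

lemma W0_decomp (hD : IsDualPairT12 T0 T0t lam) (b : T0t.adjoint.domain) :
    ∃ b0 : T0t.adjoint.domain, (b0 : H) ∈ T0.closure.domain ∧
      ∀ v : T0t.adjoint.domain, (v : H) ∈ T0.closure.domain → gip T0t (b - b0) v = 0 := by
  haveI : CompleteSpace ↥(K0gr T0) := (K0gr_closed hD).completeSpace_coe
  obtain ⟨y, hy, z, hz, hsum⟩ := (K0gr T0).exists_add_mem_mem_orthogonal
    ((WithLp.equiv 2 (H × H)).symm ((b : H), T0t.adjoint b))
  have hy' : (WithLp.equiv 2 (H × H)) y ∈ T0.closure.graph := hy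
  rcases T0.closure.mem_graph_iff.mp hy' with ⟨d, hd1, hd2⟩
  refine ⟨⟨(d : H), memW_of_mem_closure hD d.2⟩, d.2, ?_⟩
  intro v hv
  have h1 := congrArg (fun t : WithLp 2 (H × H) => ((WithLp.equiv 2 (H × H)) t).1) hsum
  have h2 := congrArg (fun t : WithLp 2 (H × H) => ((WithLp.equiv 2 (H × H)) t).2) hsum
  simp only [WithLp.equiv_apply, WithLp.equiv_symm_apply, WithLp.ofLp_toLp, WithLp.ofLp_fst,
    WithLp.ofLp_snd, WithLp.toLp_fst, WithLp.toLp_snd, WithLp.add_fst, WithLp.add_snd,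
    Equiv.apply_symm_apply] at h1 h2 hd1 hd2
  have hz1 : z.fst = (b : H) - (d : H) := by
    rw [hd1]; exact eq_sub_of_add_eq' h1.symm
  have hT1b0 : T0t.adjoint (⟨(d : H), memW_of_mem_closure hD d.2⟩ : T0t.adjoint.domain)
      = T0.closure d := T1_eq_closure' hD d.2
  have hz2 : z.snd = T0t.adjoint b - T0t.adjoint (⟨(d : H), memW_of_mem_closure hD d.2⟩ :
      T0t.adjoint.domain) := by
    rw [hT1b0, hd2]; exact eq_sub_of_add_eq' h2.symm
  have hw : (WithLp.equiv 2 (H × H)).symm ((v : H), T0.closure ⟨(v : H), hv⟩) ∈ K0gr T0 :=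
    T0.closure.mem_graph ⟨(v : H), hv⟩
  have h0 := (Submodule.mem_orthogonal _ _).mp hz _ hw
  have h0' : ⟪(v : H), z.fst⟫_ℂ + ⟪T0.closure ⟨(v : H), hv⟩, z.snd⟫_ℂ = 0 := h0
  have hT1v : T0.closure ⟨(v : H), hv⟩ = T0t.adjoint v := (T1_eq_closure' hD hv).symm
  rw [hT1v, hz1, hz2] at h0'
  show ⟪(v : H), ((b - ⟨(d : H), memW_of_mem_closure hD d.2⟩ : T0t.adjoint.domain) : H)⟫_ℂ
      + ⟪T0t.adjoint v, T0t.adjoint (b - ⟨(d : H), memW_of_mem_closure hD d.2⟩)⟫_ℂ = 0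
  rw [LinearPMap.map_sub, Submodule.coe_sub]
  exact h0'

section Algebra

variable (hW : T0t.adjoint.domain = T0.adjoint.domain)

lemma bform_add_left (u u' v : T0t.adjoint.domain) :
    bform T0 T0t hW (u + u') v = bform T0 T0t hW u v + bform T0 T0t hW u' v := by
  unfold bform pInner
  rw [LinearPMap.map_add, Submodule.coe_add, inner_add_right, inner_add_right]
  ring

lemma bform_sub_left (u u' v : T0t.adjoint.domain) :
    bform T0 T0t hW (u - u') v = bform T0 T0t hW u v - bform T0 T0t hW u' v := by
  unfold bform pInner
  rw [LinearPMap.map_sub, Submodule.coe_sub, inner_sub_right, inner_sub_right]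
  ring

lemma bform_smul_left (c : ℂ) (u v : T0t.adjoint.domain) :
    bform T0 T0t hW (c • u) v = c * bform T0 T0t hW u v := by
  unfold bform pInner
  rw [LinearPMap.map_smul, Submodule.coe_smul, inner_smul_right, inner_smul_right]
  ring

lemma bform_zero_left' (v : T0t.adjoint.domain) : bform T0 T0t hW 0 v = 0 := by
  have := bform_smul_left (T0 := T0) hW 0 0 v
  simpa using this

lemma gip_add_left (u u' v : T0t.adjoint.domain) :
    gip T0t (u + u') v = gip T0t u v + gip T0t u' v := by
  unfold gip pInner
  rw [LinearPMap.map_add, Submodule.coe_add, inner_add_right, inner_add_right]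
  ring

lemma gip_sub_left (u u' v : T0t.adjoint.domain) :
    gip T0t (u - u') v = gip T0t u v - gip T0t u' v := by
  unfold gip pInner
  rw [LinearPMap.map_sub, Submodule.coe_sub, inner_sub_right, inner_sub_right]
  ring

lemma gip_smul_left (c : ℂ) (u v : T0t.adjoint.domain) :
    gip T0t (c • u) v = c * gip T0t u v := by
  unfold gip pInner
  rw [LinearPMap.map_smul, Submodule.coe_smul, inner_smul_right, inner_smul_right]
  ring

lemma gip_zero_left (v : T0t.adjoint.domain) : gip T0t 0 v = 0 := by
  have := gip_smul_left (T0t := T0t) 0 0 v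
  simpa using this

lemma m_sub_left (M : MOp T0t) (u u' v : T0t.adjoint.domain) :
    M.m (u - u') v = M.m u v - M.m u' v := by
  have : u - u' = u + (-1 : ℂ) • u' := by rw [neg_one_smul]; exact sub_eq_add_neg u u'
  rw [this, M.add_left, M.smul_left]
  ring

lemma m_zero_left (M : MOp T0t) (v : T0t.adjoint.domain) : M.m 0 v = 0 := by
  have := M.smul_left 0 0 v
  simpa using this

lemma bform_norm_bound (u v : T0t.adjoint.domain) :
    ‖bform T0 T0t hW u v‖ ≤ ‖(v : H)‖ * ‖T0t.adjoint u‖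
      + ‖T0.adjoint ⟨(v : H), hW.le v.2⟩‖ * ‖(u : H)‖ := by
  refine (norm_sub_le _ _).trans (add_le_add ?_ ?_)
  · exact norm_inner_le_norm _ _
  · exact norm_inner_le_norm _ _

lemma gip_norm_bound (u v : T0t.adjoint.domain) :
    ‖gip T0t u v‖ ≤ ‖(v : H)‖ * ‖(u : H)‖ + ‖T0t.adjoint v‖ * ‖T0t.adjoint u‖ := by
  refine (norm_add_le _ _).trans (add_le_add ?_ ?_)
  · exact norm_inner_le_norm _ _
  · exact norm_inner_le_norm _ _

end Algebra

lemma mpolar (M : MOp T0t) (hM1 : ∀ u, 0 ≤ (M.m u u).re) (u0 : T0t.adjoint.domain)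
    (hright : ∀ v, M.m v u0 = 0) : ∀ v, M.m u0 v = 0 := by
  intro v
  by_contra hα
  set α := M.m u0 v with hαdef
  have hαpos : 0 < Complex.normSq α := Complex.normSq_pos.mpr hα
  have key : ∀ s : ℝ, 0 ≤ (M.m v v).re - s * Complex.normSq α := by
    intro s
    have h := hM1 (v + (-(s : ℂ) * starRingEnd ℂ α) • u0)
    have hexp : M.m (v + (-(s : ℂ) * starRingEnd ℂ α) • u0)
        (v + (-(s : ℂ) * starRingEnd ℂ α) • u0)
        = M.m v v + (-(s : ℂ) * starRingEnd ℂ α) * α := by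
      rw [M.add_left, M.smul_left, M.add_right, M.add_right, M.smul_right, M.smul_right,
        hright v, hright u0, ← hαdef]
      ring
    have hre : ((-(s : ℂ) * starRingEnd ℂ α) * α).re = -(s * Complex.normSq α) := by
      have : (-(s : ℂ) * starRingEnd ℂ α) * α = ((-(s * Complex.normSq α) : ℝ) : ℂ) := by
        rw [mul_assoc, ← Complex.normSq_eq_conj_mul_self]
        push_cast
        ring
      rw [this, Complex.ofReal_re]
    rw [hexp] at h
    rw [Complex.add_re, hre] at h
    linarith
  have := key (((M.m v v).re + 1) / Complex.normSq α)
  rw [div_mul_cancel₀ _ (ne_of_gt hαpos)] at this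
  linarith

lemma mzero (hD : IsDualPairT12 T0 T0t lam) (hW : T0t.adjoint.domain = T0.adjoint.domain)
    (M : MOp T0t) (hM : MBC T0 T0t hW M.m) (u0 : T0t.adjoint.domain)
    (h0 : (u0 : H) ∈ T0.closure.domain) :
    (∀ v, M.m v u0 = 0) ∧ (∀ v, M.m u0 v = 0) := by
  have hbl : ∀ v, bform T0 T0t hW u0 v = 0 := fun v => bform_zero_left hD hW u0 v h0
  have hbr : ∀ v, bform T0 T0t hW v u0 = 0 := fun v => by
    rw [bform_conj hD hW u0 v, hbl v, _root_.map_zero]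
  have hr : ∀ v, M.m v u0 = 0 := by
    intro v
    obtain ⟨a, b, ha, hb, rfl⟩ := hM.2 v
    rw [M.add_left]
    have h1 : M.m a u0 = 0 := by rw [← ha u0]; exact hbr a
    have h2 : M.m b u0 = 0 := by
      have := hb u0
      rw [hbr b, zero_add] at this
      exact this
    rw [h1, h2, add_zero]
  exact ⟨hr, mpolar M hM.1 u0 hr⟩

lemma gclosed_main (hW : T0t.adjoint.domain = T0.adjoint.domain) (M : MOp T0t) :
    GClosed T0t (kerDaddM T0 T0t hW M.m ∩ W0perp T0 T0t) := by
  intro f hfmem l hconv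
  obtain ⟨C, hC⟩ := M.bounded
  have h1 : Tendsto (fun n => ‖((f n - l : T0t.adjoint.domain) : H)‖) atTop (𝓝 0) :=
    squeeze_zero (fun n => norm_nonneg _)
      (fun n => le_add_of_nonneg_right (norm_nonneg _)) hconv
  have h2 : Tendsto (fun n => ‖T0t.adjoint (f n - l)‖) atTop (𝓝 0) :=
    squeeze_zero (fun n => norm_nonneg _)
      (fun n => le_add_of_nonneg_left (norm_nonneg _)) hconv
  constructor
  · -- `l ∈ ker (D + M)`
    intro v
    have hdiff : Tendsto (fun n => bform T0 T0t hW (f n) v + M.m (f n) v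
        - (bform T0 T0t hW l v + M.m l v)) atTop (𝓝 0) := by
      refine squeeze_zero_norm (a := fun n =>
        (‖(v : H)‖ * ‖T0t.adjoint (f n - l)‖
          + ‖T0.adjoint ⟨(v : H), hW.le v.2⟩‖ * ‖((f n - l : T0t.adjoint.domain) : H)‖)
        + C * (gdist T0t (f n) l * gnorm T0t v)) ?_ ?_
      · intro n
        have e1 : bform T0 T0t hW (f n) v + M.m (f n) v
            - (bform T0 T0t hW l v + M.m l v)
            = bform T0 T0t hW (f n - l) v + M.m (f n - l) v := by
          rw [bform_sub_left, m_sub_left]; ring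
        rw [e1]
        exact (norm_add_le _ _).trans (add_le_add (bform_norm_bound hW _ v) (hC _ v))
      · have t1 := h2.const_mul ‖(v : H)‖
        have t2 := h1.const_mul ‖T0.adjoint ⟨(v : H), hW.le v.2⟩‖
        have t3 := (hconv.mul_const (gnorm T0t v)).const_mul C
        simpa using (t1.add t2).add t3
    have hlim : Tendsto (fun n => bform T0 T0t hW (f n) v + M.m (f n) v) atTop
        (𝓝 (bform T0 T0t hW l v + M.m l v)) := by
      have := hdiff.add_const (bform T0 T0t hW l v + M.m l v)
      simpa using this
    have hzero : Tendsto (fun _ : ℕ => (0 : ℂ)) atTop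
        (𝓝 (bform T0 T0t hW l v + M.m l v)) := by
      have e : (fun n => bform T0 T0t hW (f n) v + M.m (f n) v) = fun _ : ℕ => (0 : ℂ) :=
        funext fun n => (hfmem n).1 v
      rwa [e] at hlim
    exact tendsto_nhds_unique hzero tendsto_const_nhds
  · -- `l ∈ W₀ᗮ`
    intro v hv
    have hdiff : Tendsto (fun n => gip T0t (f n) v - gip T0t l v) atTop (𝓝 0) := by
      refine squeeze_zero_norm (a := fun n =>
        ‖(v : H)‖ * ‖((f n - l : T0t.adjoint.domain) : H)‖
          + ‖T0t.adjoint v‖ * ‖T0t.adjoint (f n - l)‖) ?_ ?_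
      · intro n
        have e1 : gip T0t (f n) v - gip T0t l v = gip T0t (f n - l) v := by
          rw [gip_sub_left]
        rw [e1]
        exact gip_norm_bound _ v
      · have t1 := h1.const_mul ‖(v : H)‖
        have t2 := h2.const_mul ‖T0t.adjoint v‖
        simpa using t1.add t2
    have hlim : Tendsto (fun n => gip T0t (f n) v) atTop (𝓝 (gip T0t l v)) := by
      have := hdiff.add_const (gip T0t l v)
      simpa using this
    have hzero : Tendsto (fun _ : ℕ => (0 : ℂ)) atTop (𝓝 (gip T0t l v)) := by
      have e : (fun n => gip T0t (f n) v) = fun _ : ℕ => (0 : ℂ) :=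
        funext fun n => (hfmem n).2 v hv
      rwa [e] at hlim
    exact tendsto_nhds_unique hzero tendsto_const_nhds

end AuxFriedrichs

/-- Theorem 5.1(ii): if `M` satisfies the (M)-boundary conditions and
`V := ker (D − M)`, then `W₂ := ker (D + M) ∩ W₀^⊥` is a closed subspace of `W`
contained in `W⁻`, and `W = V ∔ W₂`. -/
theorem kerDaddM_inter_W0perp_closed_and_direct_sum
    (T0 T0t : H →ₗ.[ℂ] H) (lam mu : ℝ) (hF : IsFriedrichsPair T0 T0t lam mu)
    (hW : T0t.adjoint.domain = T0.adjoint.domain)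
    (M : MOp T0t) (hM : MBC T0 T0t hW M.m) :
    ((0 : ↥T0t.adjoint.domain) ∈ kerDaddM T0 T0t hW M.m ∩ W0perp T0 T0t ∧
     (∀ u v, u ∈ kerDaddM T0 T0t hW M.m ∩ W0perp T0 T0t →
        v ∈ kerDaddM T0 T0t hW M.m ∩ W0perp T0 T0t →
        u + v ∈ kerDaddM T0 T0t hW M.m ∩ W0perp T0 T0t) ∧
     (∀ (c : ℂ) u, u ∈ kerDaddM T0 T0t hW M.m ∩ W0perp T0 T0t →
        c • u ∈ kerDaddM T0 T0t hW M.m ∩ W0perp T0 T0t)) ∧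
    GClosed T0t (kerDaddM T0 T0t hW M.m ∩ W0perp T0 T0t) ∧
    (kerDaddM T0 T0t hW M.m ∩ W0perp T0 T0t) ⊆ Wminus T0 T0t hW ∧
    (∀ w : ↥T0t.adjoint.domain, ∃ a ∈ kerDsubM T0 T0t hW M.m,
      ∃ b ∈ kerDaddM T0 T0t hW M.m ∩ W0perp T0 T0t, w = a + b) ∧
    (∀ u, u ∈ kerDsubM T0 T0t hW M.m →
      u ∈ kerDaddM T0 T0t hW M.m ∩ W0perp T0 T0t → u = 0) := by
  have hD := hF.toIsDualPairT12
  refine ⟨⟨?_, ?_, ?_⟩, gclosed_main hW M, ?_, ?_, ?_⟩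
  · -- zero
    exact ⟨fun v => by rw [bform_zero_left' hW v, m_zero_left, zero_add],
      fun v _ => gip_zero_left v⟩
  · -- add
    rintro u v ⟨hu1, hu2⟩ ⟨hv1, hv2⟩
    refine ⟨fun w => ?_, fun w hw => ?_⟩
    · have h1 := hu1 w
      have h2 := hv1 w
      rw [bform_add_left, M.add_left]
      linear_combination h1 + h2
    · rw [gip_add_left, hu2 w hw, hv2 w hw, add_zero]
  · -- smul
    rintro c u ⟨hu1, hu2⟩
    refine ⟨fun w => ?_, fun w hw => ?_⟩
    · have h1 := hu1 w
      rw [bform_smul_left, M.smul_left]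
      linear_combination c * h1
    · rw [gip_smul_left, hu2 w hw, mul_zero]
  · -- ⊆ W⁻
    rintro u ⟨hu1, -⟩
    have h := hu1 u
    have hb : bform T0 T0t hW u u = -M.m u u := by linear_combination h
    show (bform T0 T0t hW u u).re ≤ 0
    rw [hb, Complex.neg_re]
    have := hM.1 u
    linarith
  · -- decomposition
    intro w
    obtain ⟨a, b, ha, hb, rfl⟩ := hM.2 w
    obtain ⟨b0, hb0mem, hb0perp⟩ := W0_decomp hD b
    obtain ⟨hmz1, hmz2⟩ := mzero hD hW M hM b0 hb0mem
    refine ⟨a + b0, fun v => ?_, b - b0, ⟨fun v => ?_, fun v hv => hb0perp v hv⟩, by abel⟩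
    · rw [bform_add_left, M.add_left, ha v, bform_zero_left hD hW b0 v hb0mem, hmz2 v, add_zero]
    · have h := hb v
      rw [bform_sub_left, m_sub_left, bform_zero_left hD hW b0 v hb0mem, hmz2 v]
      linear_combination h
  · -- trivial intersection
    rintro u hu1 ⟨hu2, hu3⟩
    have hb0 : ∀ v, bform T0 T0t hW u v = 0 := by
      intro v
      have h1 := hu1 v
      have h2 := hu2 v
      linear_combination h1 / 2 + h2 / 2
    have hmem := mem_W0_of_bform_zero hD hW u hb0
    have hg : gip T0t u u = 0 := hu3 u hmem
    have hg' : ⟪(u : H), (u : H)⟫_ℂ + ⟪T0t.adjoint u, T0t.adjoint u⟫_ℂ = 0 := hg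
    have hre := congrArg Complex.re hg'
    rw [Complex.add_re, Complex.zero_re] at hre
    have e1 : (⟪(u : H), (u : H)⟫_ℂ).re = ‖(u : H)‖ ^ 2 := by
      rw [← RCLike.re_to_complex]; exact inner_self_eq_norm_sq _
    have e2 : (⟪T0t.adjoint u, T0t.adjoint u⟫_ℂ).re = ‖T0t.adjoint u‖ ^ 2 := by
      rw [← RCLike.re_to_complex]; exact inner_self_eq_norm_sq _
    rw [e1, e2] at hre
    have hsum : ‖(u : H)‖ ^ 2 + ‖T0t.adjoint u‖ ^ 2 = 0 := hre
    have hnorm : ‖(u : H)‖ = 0 := by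
      nlinarith [sq_nonneg ‖(u : H)‖, sq_nonneg ‖T0t.adjoint u‖, norm_nonneg (u : H),
        norm_nonneg (T0t.adjoint u)]
    exact Subtype.ext (norm_eq_zero.mp hnorm)
end
end
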